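/- arXiv:1203.5990 — 12 statements merged into one kernel-verified Lean document; each statement's English description precedes it below -/
import Mathlib

section
/- Let E be a free R-module of rank n ≥ 1 with an (a,b)-module structure a such that a(E) ⊆ X • E (simple pole). Suppose there exist λ ∈ ℂ and an R-basis (e₀,…,e_{n−1}) of E such that for every j, a eⱼ − λ • (X • eⱼ) − X • eⱼ₊₁ ∈ X² • E (with the convention eₙ := 0). Then there exists an R-basis (ε₀,…,ε_{n−1}) of E satisfying exactly a εⱼ = λ • (X • εⱼ) + X • εⱼ₊₁ for every j (with εₙ := 0). -/
open PowerSeries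


/-- entrywise solver for `c * T = T∘shift_col - shift_row∘T - Q` -/
noncomputable def solveAux (n : ℕ) (c : ℂ) (Q : ℕ → ℕ → ℂ) (i j : ℕ) : ℂ :=
  ((if h : j + 1 < n then solveAux n c Q i (j + 1) else 0)
    - (if 0 < i then solveAux n c Q (i - 1) j else 0)
    - Q i j) / c
termination_by (i, n - j)
decreasing_by
  · exact Prod.Lex.right i (by omega)
  · exact Prod.Lex.left _ _ (by omega)

noncomputable def Pmat (n : ℕ) (C : ℕ → ℕ → ℕ → ℂ) : ℕ → ℕ → ℕ → ℂ
  | 0 => fun i j => if i = j then 1 else 0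
  | k + 1 => solveAux n (k + 1 : ℂ) (fun i j =>
      ∑ m ∈ (Finset.range (k + 1)).attach, ∑ l ∈ Finset.range n,
        C (k - m.1) i l * Pmat n C m.1 l j)
termination_by k => k
decreasing_by
  exact Finset.mem_range.mp m.2

lemma solveAux_spec (n : ℕ) (c : ℂ) (hc : c ≠ 0) (Q : ℕ → ℕ → ℂ) (i j : ℕ) :
    c * solveAux n c Q i j
      = (if h : j + 1 < n then solveAux n c Q i (j + 1) else 0)
        - (if 0 < i then solveAux n c Q (i - 1) j else 0) - Q i j := by
  rw [solveAux]
  field_simp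

lemma Pmat_zero (n : ℕ) (C : ℕ → ℕ → ℕ → ℂ) (i j : ℕ) :
    Pmat n C 0 i j = if i = j then 1 else 0 := by
  rw [Pmat]

lemma Pmat_succ_spec (n : ℕ) (C : ℕ → ℕ → ℕ → ℂ) (k i j : ℕ) :
    (k + 1 : ℂ) * Pmat n C (k + 1) i j
      = (if h : j + 1 < n then Pmat n C (k + 1) i (j + 1) else 0)
        - (if 0 < i then Pmat n C (k + 1) (i - 1) j else 0)
        - ∑ m ∈ Finset.range (k + 1), ∑ l ∈ Finset.range n,
            C (k - m) i l * Pmat n C m l j := by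
  have h1 : Pmat n C (k + 1) = solveAux n (k + 1 : ℂ) (fun i j =>
      ∑ m ∈ (Finset.range (k + 1)).attach, ∑ l ∈ Finset.range n,
        C (k - m.1) i l * Pmat n C m.1 l j) := by
    rw [Pmat]
  rw [h1, solveAux_spec _ _ (Nat.cast_add_one_ne_zero k) _ i j]
  congr 1
  exact Finset.sum_attach _ fun m => ∑ l ∈ Finset.range n, C (k - m) i l * Pmat n C m l j

lemma key_series (n : ℕ) (C : ℕ → ℕ → ℕ → ℂ) (l j : ℕ) (hl : l < n) :
    (X : ℂ⟦X⟧) ^ 2 * (∑ i ∈ Finset.range n,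
        PowerSeries.mk (fun k => Pmat n C k i j) * PowerSeries.mk (fun d => C d l i))
      + (X : ℂ⟦X⟧) ^ 2 * derivative ℂ (PowerSeries.mk fun k => Pmat n C k l j)
      + (if 0 < l then (X : ℂ⟦X⟧) * PowerSeries.mk (fun k => Pmat n C k (l - 1) j) else 0)
    = (X : ℂ⟦X⟧) * (if j + 1 < n then PowerSeries.mk (fun k => Pmat n C k l (j + 1)) else 0) := by
  have hX2 : ∀ φ : ℂ⟦X⟧, (X : ℂ⟦X⟧) ^ 2 * φ = X * (X * φ) := by
    intro φ; ring
  rw [hX2, hX2]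
  have hiteX : ∀ (c : Prop) [Decidable c] (φ : ℂ⟦X⟧),
      (if c then (X : ℂ⟦X⟧) * φ else 0) = X * (if c then φ else 0) := by
    intro c _ φ; split <;> simp
  rw [hiteX]
  rw [← mul_add, ← mul_add]
  ext k
  match k with
  | 0 =>
    simp
    split <;> simp
  | k + 1 =>
    rw [coeff_succ_X_mul, coeff_succ_X_mul]
    simp only [map_add]
    match k with
    | 0 =>
      have h0 : ∀ φ : ℂ⟦X⟧, (coeff 0) ((X:ℂ⟦X⟧) * φ) = 0 := by
        intro φ
        simp [coeff_zero_eq_constantCoeff]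
      rw [h0, h0]
      simp only [apply_ite (coeff 0), map_zero, coeff_zero_eq_constantCoeff, constantCoeff_mk]
      rw [Pmat_zero, Pmat_zero]
      split_ifs <;> simp_all <;> omega
    | k + 1 =>
      rw [coeff_succ_X_mul, coeff_succ_X_mul]
      simp only [apply_ite (coeff (k+1)), map_zero, coeff_mk, map_sum, coeff_derivative]
      have hA : ∀ i, (coeff k) ((PowerSeries.mk fun k => Pmat n C k i j)
            * PowerSeries.mk (fun d => C d l i))
          = ∑ m ∈ Finset.range (k + 1), Pmat n C m i j * C (k - m) l i := by
        intro i
        rw [coeff_mul, Finset.Nat.sum_antidiagonal_eq_sum_range_succ_mk]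
        simp [coeff_mk]
      simp only [hA]
      have hspec := Pmat_succ_spec n C k l j
      rw [Finset.sum_comm]
      have hQ : ∑ m ∈ Finset.range (k+1), ∑ i ∈ Finset.range n, Pmat n C m i j * C (k - m) l i
          = ∑ m ∈ Finset.range (k + 1), ∑ i ∈ Finset.range n, C (k - m) l i * Pmat n C m i j := by
        apply Finset.sum_congr rfl; intros; apply Finset.sum_congr rfl; intros; ring
      rw [hQ]
      rw [dite_eq_ite] at hspec
      linear_combination hspec

lemma shift_sum {M : Type*} [AddCommMonoid M] [Module (PowerSeries ℂ) M]
    (n : ℕ) (v : Fin n → M) (c : Fin n → ℂ⟦X⟧) :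
    ∑ i : Fin n, c i • (if h : (i : ℕ) + 1 < n then v ⟨(i : ℕ) + 1, h⟩ else 0)
      = ∑ l : Fin n,
          (if h : 0 < (l : ℕ) then c ⟨(l : ℕ) - 1, by omega⟩ else 0) • v l := by
  set V : ℕ → M := fun i => if h : i < n then v ⟨i, h⟩ else 0 with hV
  set CC : ℕ → ℂ⟦X⟧ := fun i => if h : i < n then c ⟨i, h⟩ else 0 with hCC
  have hL : ∀ i : Fin n, c i • (if h : (i : ℕ) + 1 < n then v ⟨(i : ℕ) + 1, h⟩ else 0)
      = CC i • V ((i : ℕ) + 1) := by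
    intro i
    simp only [hV, hCC, i.isLt, dif_pos, Fin.eta]
  have hG : ∀ l : Fin n,
      (if h : 0 < (l : ℕ) then c ⟨(l : ℕ) - 1, by omega⟩ else 0) • v l
      = (if 0 < (l : ℕ) then CC ((l : ℕ) - 1) else 0) • V l := by
    intro l
    have hl : ((l : ℕ) - 1) < n := by omega
    simp only [hV, hCC, l.isLt, dif_pos, Fin.eta, hl]
    split <;> simp
  simp only [hL, hG]
  rw [Fin.sum_univ_eq_sum_range (fun i => CC i • V (i + 1)) n,
    Fin.sum_univ_eq_sum_range (fun l => (if 0 < l then CC (l - 1) else 0) • V l) n]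
  have : ∀ i : ℕ, CC i • V (i + 1)
      = (if 0 < (i+1) then CC ((i+1) - 1) else 0) • V (i+1) := by
    intro i; simp
  simp only [this]
  have h1 := Finset.sum_range_succ' (fun l => (if 0 < l then CC (l - 1) else 0) • V l) n
  have h2 := Finset.sum_range_succ (fun l => (if 0 < l then CC (l - 1) else 0) • V l) n
  have hVn : V n = 0 := by simp [hV]
  rw [hVn] at h2
  simp only [Nat.lt_irrefl, if_neg, smul_zero, add_zero, if_pos, Nat.lt_irrefl] at h1 h2
  simp only [show ¬ (0:ℕ) < 0 by omega, if_false, zero_smul, add_zero] at h1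
  rw [← h2, h1]

set_option maxHeartbeats 1000000 in
/-- Let `E` be a free `ℂ⟦X⟧`-module of rank `n ≥ 1` with an
(a,b)-module structure `a` having a simple pole (`a E ⊆ X • E`).  If there are
`λ ∈ ℂ` and a basis `(e₀, …, e_{n-1})` such that
`a eⱼ - λ • (X • eⱼ) - X • eⱼ₊₁ ∈ X² • E` (with `eₙ := 0`), then there is a
basis `(ε₀, …, ε_{n-1})` with exactly `a εⱼ = λ • (X • εⱼ) + X • εⱼ₊₁`. -/
theorem stmt1 (n : ℕ) (hn : 1 ≤ n)
    (E : Type*) [AddCommGroup E] [Module ℂ E] [Module (PowerSeries ℂ) E]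
    [IsScalarTower ℂ (PowerSeries ℂ) E]
    (a : E →ₗ[ℂ] E)
    (ha : ∀ (S : PowerSeries ℂ) (x : E),
      a (S • x) = S • a x + ((X : PowerSeries ℂ) ^ 2 * derivative ℂ S) • x)
    (hsp : ∀ x : E, ∃ y : E, a x = (X : PowerSeries ℂ) • y)
    (lam : ℂ) (e : Module.Basis (Fin n) (PowerSeries ℂ) E)
    (he : ∀ j : Fin n, ∃ y : E,
      a (e j) - lam • ((X : PowerSeries ℂ) • e j)
        - (X : PowerSeries ℂ) •
            (if h : (j : ℕ) + 1 < n then e ⟨(j : ℕ) + 1, h⟩ else 0)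
        = ((X : PowerSeries ℂ) ^ 2) • y) :
    ∃ ε : Module.Basis (Fin n) (PowerSeries ℂ) E, ∀ j : Fin n,
      a (ε j) = lam • ((X : PowerSeries ℂ) • ε j)
        + (X : PowerSeries ℂ) •
            (if h : (j : ℕ) + 1 < n then ε ⟨(j : ℕ) + 1, h⟩ else 0) := by
  classical
  set y : Fin n → E := fun i => (he i).choose with hydef
  set Ee : Fin n → E :=
    fun i => if h : (i : ℕ) + 1 < n then e ⟨(i : ℕ) + 1, h⟩ else 0 with hEe
  have hy : ∀ i : Fin n, a (e i) = lam • ((X : ℂ⟦X⟧) • e i)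
      + (X : ℂ⟦X⟧) • Ee i + ((X : ℂ⟦X⟧) ^ 2) • y i := by
    intro i
    have h := (he i).choose_spec
    simp only [hEe, hydef]
    have h2 := sub_eq_iff_eq_add.mp (sub_eq_iff_eq_add.mp h)
    exact h2.trans (by abel)
  set Cc : ℕ → ℕ → ℕ → ℂ := fun d i l =>
    if hi : i < n then if hl : l < n then
      PowerSeries.coeff d (e.repr (y ⟨l, hl⟩) ⟨i, hi⟩) else 0 else 0 with hCc
  set P : Matrix (Fin n) (Fin n) ℂ⟦X⟧ :=
    Matrix.of (fun i j => PowerSeries.mk fun k => Pmat n Cc k (i : ℕ) (j : ℕ)) with hP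
  have hPapp : ∀ i j : Fin n,
      P i j = PowerSeries.mk fun k => Pmat n Cc k (i : ℕ) (j : ℕ) := fun i j => rfl
  have hPc : P.map (constantCoeff (R := ℂ)) = 1 := by
    ext i j
    rw [Matrix.map_apply, hPapp, ← coeff_zero_eq_constantCoeff_apply, coeff_mk,
      Pmat_zero, Matrix.one_apply]
    simp [Fin.ext_iff]
  have hdet : IsUnit P.det := by
    rw [PowerSeries.isUnit_iff_constantCoeff]
    have hd : (constantCoeff (R := ℂ)) P.det = (P.map (constantCoeff (R := ℂ))).det :=
      RingHom.map_det _ _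
    rw [hd, hPc, Matrix.det_one]
    exact isUnit_one
  set ε : Module.Basis (Fin n) ℂ⟦X⟧ E := e.map (Matrix.toLinearEquiv e P hdet) with hε
  have hεapp : ∀ j : Fin n, ε j = ∑ i, P i j • e i := by
    intro j
    rw [hε, Module.Basis.map_apply, Matrix.toLinearEquiv_apply]
    exact Matrix.toLin_self e e P j
  set cser : Fin n → Fin n → ℂ⟦X⟧ := fun l i => e.repr (y i) l with hcser
  have hyrepr : ∀ i : Fin n, y i = ∑ l, cser l i • e l :=
    fun i => (Module.Basis.sum_repr e (y i)).symm
  have hcmk : ∀ l i : Fin n,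
      cser l i = PowerSeries.mk fun d => Cc d (l : ℕ) (i : ℕ) := by
    intro l i
    ext d
    rw [coeff_mk, hCc]
    simp [l.isLt, i.isLt]
    rfl
  set Cl : ℂ⟦X⟧ := (algebraMap ℂ ℂ⟦X⟧) lam with hCl
  have hCls : ∀ z : E, lam • z = Cl • z := fun z => (algebraMap_smul ℂ⟦X⟧ lam z).symm
  -- the key scalar identity
  have key : ∀ l j : Fin n,
      (if h : 0 < (l : ℕ) then (X : ℂ⟦X⟧) * P ⟨(l : ℕ) - 1, by omega⟩ j else 0)
        + (X : ℂ⟦X⟧) ^ 2 * (∑ i, P i j * cser l i)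
        + (X : ℂ⟦X⟧) ^ 2 * derivative ℂ (P l j)
      = if h : (j : ℕ) + 1 < n then (X : ℂ⟦X⟧) * P l ⟨(j : ℕ) + 1, h⟩ else 0 := by
    intro l j
    have h := key_series n Cc (l : ℕ) (j : ℕ) l.isLt
    have h1 : ∑ i, P i j * cser l i
        = ∑ i ∈ Finset.range n, PowerSeries.mk (fun k => Pmat n Cc k i (j : ℕ))
            * PowerSeries.mk (fun d => Cc d (l : ℕ) i) := by
      rw [← Fin.sum_univ_eq_sum_range]
      exact Finset.sum_congr rfl fun i _ => by rw [hPapp, hcmk]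
    have h2 : (if h : 0 < (l : ℕ) then (X : ℂ⟦X⟧) * P ⟨(l : ℕ) - 1, by omega⟩ j else 0)
        = if 0 < (l : ℕ) then
            (X : ℂ⟦X⟧) * PowerSeries.mk (fun k => Pmat n Cc k ((l : ℕ) - 1) (j : ℕ)) else 0 := by
      split <;> simp [hPapp]
    have h3 : (if h : (j : ℕ) + 1 < n then (X : ℂ⟦X⟧) * P l ⟨(j : ℕ) + 1, h⟩ else 0)
        = if (j : ℕ) + 1 < n then
            (X : ℂ⟦X⟧) * PowerSeries.mk (fun k => Pmat n Cc k (l : ℕ) ((j : ℕ) + 1)) else 0 := by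
      split <;> simp [hPapp]
    rw [h1, h2, h3, hPapp]
    rw [mul_ite, mul_zero] at h
    linear_combination h
  refine ⟨ε, fun j => ?_⟩
  -- expand LHS
  have expand : ∀ i : Fin n, P i j • a (e i)
        + ((X : ℂ⟦X⟧) ^ 2 * derivative ℂ (P i j)) • e i
      = (Cl * X * P i j) • e i + (((X : ℂ⟦X⟧) * P i j) • Ee i
          + ((((X : ℂ⟦X⟧) ^ 2 * P i j) • y i)
            + ((X : ℂ⟦X⟧) ^ 2 * derivative ℂ (P i j)) • e i)) := by
    intro i
    rw [hy i, hCls, smul_add, smul_add, smul_smul, smul_smul, smul_smul, smul_smul]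
    rw [show P i j * Cl * X = Cl * X * P i j by ring,
      show P i j * X = (X : ℂ⟦X⟧) * P i j by ring,
      show P i j * (X : ℂ⟦X⟧) ^ 2 = (X : ℂ⟦X⟧) ^ 2 * P i j by ring]
    abel
  have lhs1 : a (ε j) = ∑ i, (P i j • a (e i)
      + ((X : ℂ⟦X⟧) ^ 2 * derivative ℂ (P i j)) • e i) := by
    rw [hεapp j, map_sum]
    exact Finset.sum_congr rfl fun i _ => ha _ _
  rw [lhs1]
  simp only [expand]
  rw [Finset.sum_add_distrib, Finset.sum_add_distrib, Finset.sum_add_distrib]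
  -- shift term
  have hS2 : ∑ i : Fin n, ((X : ℂ⟦X⟧) * P i j) • Ee i
      = ∑ l : Fin n,
          (if h : 0 < (l : ℕ) then (X : ℂ⟦X⟧) * P ⟨(l : ℕ) - 1, by omega⟩ j else 0) • e l := by
    rw [hEe]
    exact shift_sum n e fun i => (X : ℂ⟦X⟧) * P i j
  -- y term
  have hS3 : ∑ i : Fin n, ((X : ℂ⟦X⟧) ^ 2 * P i j) • y i
      = ∑ l : Fin n, ((X : ℂ⟦X⟧) ^ 2 * ∑ i, P i j * cser l i) • e l := by
    calc ∑ i : Fin n, ((X : ℂ⟦X⟧) ^ 2 * P i j) • y i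
        = ∑ i : Fin n, ∑ l : Fin n, (((X : ℂ⟦X⟧) ^ 2 * P i j) * cser l i) • e l := by
          refine Finset.sum_congr rfl fun i _ => ?_
          rw [hyrepr i, Finset.smul_sum]
          exact Finset.sum_congr rfl fun l _ => by rw [smul_smul]
      _ = ∑ l : Fin n, ∑ i : Fin n, (((X : ℂ⟦X⟧) ^ 2 * P i j) * cser l i) • e l :=
          Finset.sum_comm
      _ = ∑ l : Fin n, ((X : ℂ⟦X⟧) ^ 2 * ∑ i, P i j * cser l i) • e l := by
          refine Finset.sum_congr rfl fun l _ => ?_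
          rw [← Finset.sum_smul, Finset.mul_sum]
          congr 1
          exact Finset.sum_congr rfl fun i _ => by ring
  rw [hS2, hS3]
  rw [← Finset.sum_add_distrib, ← Finset.sum_add_distrib]
  have hmerge : ∀ l : Fin n,
      (if h : 0 < (l : ℕ) then (X : ℂ⟦X⟧) * P ⟨(l : ℕ) - 1, by omega⟩ j else 0) • e l
        + (((X : ℂ⟦X⟧) ^ 2 * ∑ i, P i j * cser l i) • e l
          + ((X : ℂ⟦X⟧) ^ 2 * derivative ℂ (P l j)) • e l)
      = (if h : (j : ℕ) + 1 < n then (X : ℂ⟦X⟧) * P l ⟨(j : ℕ) + 1, h⟩ else 0) • e l := by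
    intro l
    rw [← add_smul, ← add_smul, ← add_assoc, key l j]
  simp only [hmerge]
  -- now the RHS
  rw [hCls, hεapp j, Finset.smul_sum, Finset.smul_sum]
  have hR1 : ∀ i : Fin n, Cl • ((X : ℂ⟦X⟧) • P i j • e i) = (Cl * X * P i j) • e i := by
    intro i
    rw [smul_smul, smul_smul, mul_assoc]
  simp only [hR1]
  congr 1
  by_cases hj1 : (j : ℕ) + 1 < n
  · simp only [dif_pos hj1]
    rw [hεapp ⟨(j : ℕ) + 1, hj1⟩, Finset.smul_sum]
    exact Finset.sum_congr rfl fun l _ => by rw [smul_smul]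
  · simp only [dif_neg hj1, smul_zero]
    simp
end

section
/- Let λ₁ ∈ ℚ with λ₁ > 1, let p₁ ∈ ℕ with p₁ ≥ 1, and set λ₂ := λ₁ + p₁ − 1. Let E and F be rank-2 (a,b)-modules with R-bases (e₁,e₂) and (f₁,f₂) satisfying a e₁ = λ₁ • (X • e₁), a e₂ = λ₂ • (X • e₂) + S • e₁ and a f₁ = λ₁ • (X • f₁), a f₂ = λ₂ • (X • f₂) + T • f₁, where S, T ∈ ℂ⟦X⟧ have constant term 1. If there exists an R-linear isomorphism φ : E ≃ F with φ ∘ a_E = a_F ∘ φ, then the coefficient of X^{p₁} in S equals the coefficient of X^{p₁} in T (the parameter of a rank-2 fresco is an isomorphism invariant). -/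
open PowerSeries

/-- `a` is an (a,b)-module structure on the `ℂ⟦X⟧`-module `E`:
`a (S • x) = S • a x + (X² * S′) • x`. -/
def IsABStructure (E : Type*) [AddCommGroup E] [Module ℂ E]
    [Module (PowerSeries ℂ) E] [IsScalarTower ℂ (PowerSeries ℂ) E]
    (a : E →ₗ[ℂ] E) : Prop :=
  ∀ (S : PowerSeries ℂ) (x : E),
    a (S • x) = S • a x + ((X : PowerSeries ℂ) ^ 2 * derivative ℂ S) • x

/-- If `X² * g′ = 0` then `g` is a constant power series. -/
theorem aux_const_of (g : PowerSeries ℂ)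
    (hg : (X : PowerSeries ℂ) ^ 2 * derivative ℂ g = 0) :
    g = C (constantCoeff g) := by
  ext n
  cases n with
  | zero => simp [coeff_zero_eq_constantCoeff_apply, coeff_C]
  | succ n =>
    have h := congrArg (coeff (n + 2)) hg
    rw [coeff_X_pow_mul, coeff_derivative, map_zero] at h
    have hn : ((n : ℂ) + 1) ≠ 0 := by exact_mod_cast Nat.succ_ne_zero n
    have : coeff (n + 1) g = 0 := by
      rcases mul_eq_zero.mp h with h' | h'
      · exact h'
      · exact absurd (by exact_mod_cast h') hn
    simp [coeff_C, this]

/-- For rank-2 frescos `a e₁ = λ₁ • (X • e₁)`,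
`a e₂ = λ₂ • (X • e₂) + S • e₁` (with `λ₂ = λ₁ + p₁ - 1`, `S(0) = 1`), the
coefficient of `X^{p₁}` in `S` (the parameter) is an isomorphism invariant. -/
theorem stmt4 (lam1 : ℚ) (hlam1 : 1 < lam1) (p1 : ℕ) (hp1 : 1 ≤ p1)
    (lam2 : ℚ) (hlam2 : lam2 = lam1 + p1 - 1)
    (E : Type*) [AddCommGroup E] [Module ℂ E]
    [Module (PowerSeries ℂ) E] [IsScalarTower ℂ (PowerSeries ℂ) E]
    (F : Type*) [AddCommGroup F] [Module ℂ F]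
    [Module (PowerSeries ℂ) F] [IsScalarTower ℂ (PowerSeries ℂ) F]
    (aE : E →ₗ[ℂ] E) (aF : F →ₗ[ℂ] F)
    (haE : IsABStructure E aE) (haF : IsABStructure F aF)
    (S T : PowerSeries ℂ)
    (hS : constantCoeff S = 1) (hT : constantCoeff T = 1)
    (e : Module.Basis (Fin 2) (PowerSeries ℂ) E) (f : Module.Basis (Fin 2) (PowerSeries ℂ) F)
    (he1 : aE (e 0) = (lam1 : ℂ) • ((X : PowerSeries ℂ) • e 0))
    (he2 : aE (e 1) = (lam2 : ℂ) • ((X : PowerSeries ℂ) • e 1) + S • e 0)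
    (hf1 : aF (f 0) = (lam1 : ℂ) • ((X : PowerSeries ℂ) • f 0))
    (hf2 : aF (f 1) = (lam2 : ℂ) • ((X : PowerSeries ℂ) • f 1) + T • f 0)
    (φ : E ≃ₗ[PowerSeries ℂ] F) (hφ : ∀ x : E, φ (aE x) = aF (φ x)) :
    coeff p1 S = coeff p1 T := by
  classical
  obtain ⟨k, rfl⟩ : ∃ k, p1 = k + 1 :=
    Nat.exists_eq_succ_of_ne_zero (by omega)
  set l1 : ℂ := ((lam1 : ℚ) : ℂ) with hl1def
  set l2 : ℂ := ((lam2 : ℚ) : ℂ) with hl2def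
  have hl21 : l2 - l1 = (k : ℂ) := by
    rw [hl1def, hl2def, hlam2]; push_cast; ring
  -- ℂ-smul versus PowerSeries-smul
  have hCsE : ∀ (c : ℂ) (y : E), c • y = (C c : PowerSeries ℂ) • y := by
    intro c y
    calc c • y = c • ((1 : PowerSeries ℂ) • y) := by rw [one_smul]
      _ = (c • (1 : PowerSeries ℂ)) • y := (smul_assoc c (1 : PowerSeries ℂ) y).symm
      _ = (C c : PowerSeries ℂ) • y := by rw [smul_eq_C_mul, mul_one]
  have hCsF : ∀ (c : ℂ) (y : F), c • y = (C c : PowerSeries ℂ) • y := by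
    intro c y
    calc c • y = c • ((1 : PowerSeries ℂ) • y) := by rw [one_smul]
      _ = (c • (1 : PowerSeries ℂ)) • y := (smul_assoc c (1 : PowerSeries ℂ) y).symm
      _ = (C c : PowerSeries ℂ) • y := by rw [smul_eq_C_mul, mul_one]
  have he1' : aE (e 0) = (C l1 * X) • e 0 := by
    rw [he1, hCsE, smul_smul]
  have he2' : aE (e 1) = (C l2 * X) • e 1 + S • e 0 := by
    rw [he2, hCsE, smul_smul]
  have hf1' : aF (f 0) = (C l1 * X) • f 0 := by
    rw [hf1, hCsF, smul_smul]
  have hf2' : aF (f 1) = (C l2 * X) • f 1 + T • f 0 := by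
    rw [hf2, hCsF, smul_smul]
  -- coordinates of φ(e 0) and φ(e 1) in the basis f
  set α := f.repr (φ (e 0)) 0 with hαdef
  set β := f.repr (φ (e 0)) 1 with hβdef
  set γ := f.repr (φ (e 1)) 0 with hγdef
  set δ := f.repr (φ (e 1)) 1 with hδdef
  have hx0 : φ (e 0) = α • f 0 + β • f 1 := by
    have h := f.sum_repr (φ (e 0))
    rw [Fin.sum_univ_two] at h
    exact h.symm
  have hx1 : φ (e 1) = γ • f 0 + δ • f 1 := by
    have h := f.sum_repr (φ (e 1))
    rw [Fin.sum_univ_two] at h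
    exact h.symm
  have hcoord : ∀ u v u' v' : PowerSeries ℂ,
      u • f 0 + v • f 1 = u' • f 0 + v' • f 1 → u = u' ∧ v = v' := by
    intro u v u' v' h
    have h0 := congrArg (fun x => f.repr x 0) h
    have h1 := congrArg (fun x => f.repr x 1) h
    simp [Finsupp.single_apply] at h0 h1
    exact ⟨h0, h1⟩
  -- first master equation, from e 0
  have h := hφ (e 0)
  rw [he1', map_smul, hx0, map_add, haF α (f 0), haF β (f 1), hf1', hf2'] at h
  have h2a : (C l1 * X * α) • f 0 + (C l1 * X * β) • f 1
      = (α * (C l1 * X) + X ^ 2 * derivative ℂ α + β * T) • f 0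
        + (β * (C l2 * X) + X ^ 2 * derivative ℂ β) • f 1 := by
    calc (C l1 * X * α) • f 0 + (C l1 * X * β) • f 1
        = (C l1 * X) • (α • f 0 + β • f 1) := by rw [smul_add, smul_smul, smul_smul]
      _ = α • ((C l1 * X) • f 0) + (X ^ 2 * derivative ℂ α) • f 0
            + (β • ((C l2 * X) • f 1 + T • f 0)
              + (X ^ 2 * derivative ℂ β) • f 1) := h
      _ = _ := by simp only [smul_add, smul_smul, add_smul]; abel
  obtain ⟨hEqA, hEqB⟩ := hcoord _ _ _ _ h2a
  -- second master equation, from e 1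
  have h2 := hφ (e 1)
  rw [he2', map_add, map_smul, map_smul, hx0, hx1, map_add,
    haF γ (f 0), haF δ (f 1), hf1', hf2'] at h2
  have h2b : (C l2 * X * γ + S * α) • f 0 + (C l2 * X * δ + S * β) • f 1
      = (γ * (C l1 * X) + X ^ 2 * derivative ℂ γ + δ * T) • f 0
        + (δ * (C l2 * X) + X ^ 2 * derivative ℂ δ) • f 1 := by
    calc (C l2 * X * γ + S * α) • f 0 + (C l2 * X * δ + S * β) • f 1
        = (C l2 * X) • (γ • f 0 + δ • f 1) + S • (α • f 0 + β • f 1) := by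
          simp only [smul_add, smul_smul, add_smul]; abel
      _ = γ • ((C l1 * X) • f 0) + (X ^ 2 * derivative ℂ γ) • f 0
            + (δ • ((C l2 * X) • f 1 + T • f 0)
              + (X ^ 2 * derivative ℂ δ) • f 1) := h2
      _ = _ := by simp only [smul_add, smul_smul, add_smul]; abel
  obtain ⟨hEqC, hEqD⟩ := hcoord _ _ _ _ h2b
  -- β = 0
  have hA' : β * T = -((X : PowerSeries ℂ) ^ 2 * derivative ℂ α) := by
    linear_combination -hEqA
  have hβ0 : constantCoeff β = 0 := by
    have h0 := congrArg (constantCoeff) hA'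
    simp [hT] at h0
    exact h0
  have hβ : β = 0 := by
    have hB' : C (l1 - l2) * ((X : PowerSeries ℂ) * β)
        = X ^ 2 * derivative ℂ β := by
      rw [map_sub]; linear_combination hEqB
    ext n
    cases n with
    | zero => rw [coeff_zero_eq_constantCoeff_apply, hβ0]; simp
    | succ n =>
      have hc := congrArg (coeff (n + 2)) hB'
      rw [coeff_C_mul, coeff_succ_X_mul, coeff_X_pow_mul, coeff_derivative] at hc
      have hfac : (l1 - l2 - ((n : ℂ) + 1)) ≠ 0 := by
        have : l1 - l2 - ((n : ℂ) + 1) = -(((k + n + 1 : ℕ) : ℂ)) := by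
          have h21 : l2 = l1 + (k : ℂ) := by linear_combination hl21
          rw [h21]; push_cast; ring
        rw [this, neg_ne_zero]
        exact_mod_cast Nat.succ_ne_zero (k + n)
      have hz : coeff (n + 1) β * (l1 - l2 - ((n : ℂ) + 1)) = 0 := by
        push_cast at hc ⊢
        linear_combination hc
      simpa using (mul_eq_zero.mp hz).resolve_right hfac
  -- α is constant
  have hαX : (X : PowerSeries ℂ) ^ 2 * derivative ℂ α = 0 := by
    have h' := hA'
    rw [hβ, zero_mul] at h'
    exact neg_eq_zero.mp h'.symm
  set a0 := constantCoeff α with ha0def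
  have hαC : α = C a0 := aux_const_of α hαX
  -- δ is constant
  have hδX : (X : PowerSeries ℂ) ^ 2 * derivative ℂ δ = 0 := by
    have h' := hEqD
    rw [hβ, mul_zero] at h'
    linear_combination -h'
  set d0 := constantCoeff δ with hd0def
  have hδC : δ = C d0 := aux_const_of δ hδX
  -- a0 = d0 from the constant coefficient of hEqC
  have had : a0 = d0 := by
    have h00 := congrArg (constantCoeff) hEqC
    simp [hS, hT] at h00
    exact h00
  -- a0 ≠ 0
  have ha0 : a0 ≠ 0 := by
    intro h0
    have hz : φ (e 0) = 0 := by
      rw [hx0, hβ, hαC, h0, map_zero, zero_smul, zero_smul, add_zero]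
    exact e.ne_zero 0 (φ.map_eq_zero_iff.mp hz)
  -- extract coefficient k+1 of the first-column equation
  have hC' : C (l2 - l1) * ((X : PowerSeries ℂ) * γ) + C a0 * S
      = X ^ 2 * derivative ℂ γ + C d0 * T := by
    rw [map_sub]
    linear_combination hEqC - S * hαC + T * hδC
  have hX2 : coeff (k + 1) ((X : PowerSeries ℂ) ^ 2 * derivative ℂ γ)
      = (k : ℂ) * coeff k γ := by
    cases k with
    | zero =>
      rw [coeff_X_pow_mul']
      simp
    | succ m =>
      have h22 : m + 1 + 1 = m + 2 := rfl
      rw [h22, coeff_X_pow_mul, coeff_derivative]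
      push_cast
      ring
  have hc := congrArg (coeff (k + 1)) hC'
  rw [map_add, map_add, coeff_C_mul, coeff_C_mul, coeff_C_mul, coeff_succ_X_mul,
    hX2] at hc
  have hfin : a0 * coeff (k + 1) S = a0 * coeff (k + 1) T := by
    linear_combination hc - coeff k γ * hl21 - coeff (k + 1) T * had
  exact mul_left_cancel₀ ha0 hfin
end

section
/- Let λ₁, λ₂, λ₃ ∈ ℚ with λ₂ − λ₁ ∉ ℤ and λ₃ − λ₁ ∉ ℤ. Let E be a rank-3 (a,b)-module presented by (λ₁,λ₂,λ₃; S₁,S₂), where S₁, S₂ ∈ ℂ⟦X⟧ have constant term 1. Set γ := coeff₁ S₁. Then E also admits a presentation (λ₁,λ₂,λ₃; 1 + γ·X, S₂): there exists an R-basis (ε₁,ε₂,ε₃) of E with a ε₁ = λ₁ • (X • ε₁), a ε₂ = λ₂ • (X • ε₂) + (1 + γ·X) • ε₁, and a ε₃ = λ₃ • (X • ε₃) + S₂ • ε₂. -/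
open PowerSeries

/-- The rank-3 (a,b)-module `(E, a)` is presented by `(λ₁, λ₂, λ₃; S₁, S₂)` :
there is a `ℂ⟦X⟧`-basis `(e₁,e₂,e₃)` with `a e₁ = λ₁ • (X • e₁)`,
`a e₂ = λ₂ • (X • e₂) + S₁ • e₁` and `a e₃ = λ₃ • (X • e₃) + S₂ • e₂`. -/
def PresentedRank3 (E : Type*) [AddCommGroup E] [Module ℂ E]
    [Module (PowerSeries ℂ) E] [IsScalarTower ℂ (PowerSeries ℂ) E]
    (a : E →ₗ[ℂ] E) (l1 l2 l3 : ℂ) (S1 S2 : PowerSeries ℂ) : Prop :=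
  ∃ e : Module.Basis (Fin 3) (PowerSeries ℂ) E,
    a (e 0) = l1 • ((X : PowerSeries ℂ) • e 0) ∧
    a (e 1) = l2 • ((X : PowerSeries ℂ) • e 1) + S1 • e 0 ∧
    a (e 2) = l3 • ((X : PowerSeries ℂ) • e 2) + S2 • e 1

/-- Solve the "ODE" `X² W' + μ X W = F` in `ℂ⟦X⟧` when `μ` avoids `-ℕ`. -/
lemma ode_solve (μ : ℂ) (hμ : ∀ n : ℕ, (n : ℂ) + μ ≠ 0) (F : ℂ⟦X⟧)
    (hF : constantCoeff F = 0) :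
    ∃ W : ℂ⟦X⟧, constantCoeff W = coeff 1 F / μ ∧
      (X : ℂ⟦X⟧) ^ 2 * derivative ℂ W + C μ * ((X : ℂ⟦X⟧) * W) = F := by
  refine ⟨PowerSeries.mk (fun n => coeff (n + 1) F / ((n : ℂ) + μ)), by simp, ?_⟩
  ext m
  match m with
  | 0 =>
    simp [hF, pow_two, mul_assoc]
  | 1 =>
    have h0 := hμ 0
    rw [Nat.cast_zero, zero_add] at h0
    simp only [pow_two, mul_assoc, map_add, coeff_succ_X_mul, coeff_C_mul, coeff_mk,
      coeff_zero_X_mul, Nat.cast_zero, zero_add, zero_add]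
    field_simp
  | (k + 2) =>
    have hk := hμ (k + 1)
    rw [Nat.cast_add, Nat.cast_one] at hk
    simp only [pow_two, mul_assoc, map_add, coeff_succ_X_mul, coeff_C_mul, coeff_mk,
      coeff_derivative, Nat.cast_add, Nat.cast_one]
    field_simp

lemma csmul_eq {E : Type*} [AddCommGroup E] [Module ℂ E]
    [Module (PowerSeries ℂ) E] [IsScalarTower ℂ (PowerSeries ℂ) E]
    (c : ℂ) (x : E) : c • x = (C c : ℂ⟦X⟧) • x := by
  rw [← algebraMap_smul (PowerSeries ℂ) c x, PowerSeries.algebraMap_apply]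
  simp

/-- If `λ₂ - λ₁ ∉ ℤ` and `λ₃ - λ₁ ∉ ℤ`, a rank-3 fresco
presented by `(λ₁,λ₂,λ₃; S₁,S₂)` admits the presentation
`(λ₁,λ₂,λ₃; 1 + γ·X, S₂)` where `γ = coeff₁ S₁`. -/
theorem stmt5 (lam1 lam2 lam3 : ℚ)
    (h21 : ¬ ∃ m : ℤ, lam2 - lam1 = (m : ℚ))
    (h31 : ¬ ∃ m : ℤ, lam3 - lam1 = (m : ℚ))
    (E : Type*) [AddCommGroup E] [Module ℂ E]
    [Module (PowerSeries ℂ) E] [IsScalarTower ℂ (PowerSeries ℂ) E]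
    (a : E →ₗ[ℂ] E) (ha : IsABStructure E a)
    (S1 S2 : PowerSeries ℂ)
    (hS1 : constantCoeff S1 = 1) (hS2 : constantCoeff S2 = 1)
    (hE : PresentedRank3 E a (lam1 : ℂ) (lam2 : ℂ) (lam3 : ℂ) S1 S2)
    (γ : ℂ) (hγ : γ = coeff 1 S1) :
    PresentedRank3 E a (lam1 : ℂ) (lam2 : ℂ) (lam3 : ℂ)
      (1 + C γ * X) S2 := by
  obtain ⟨e, he0, he1, he2⟩ := hE
  -- non-resonance hypotheses
  have hμ2 : ∀ n : ℕ, (n : ℂ) + ((lam1 : ℂ) - (lam2 : ℂ)) ≠ 0 := by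
    intro n h
    apply h21
    refine ⟨n, ?_⟩
    have : ((lam2 - lam1 : ℚ) : ℂ) = ((n : ℤ) : ℂ) := by push_cast; linear_combination -h
    exact_mod_cast this
  have hμ3 : ∀ n : ℕ, (n : ℂ) + ((lam1 : ℂ) - (lam3 : ℂ)) ≠ 0 := by
    intro n h
    apply h31
    refine ⟨n, ?_⟩
    have : ((lam3 - lam1 : ℚ) : ℂ) = ((n : ℤ) : ℂ) := by push_cast; linear_combination -h
    exact_mod_cast this
  -- solve for W
  obtain ⟨W, hW0, hW⟩ := ode_solve ((lam1 : ℂ) - (lam2 : ℂ)) hμ2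
      ((1 + C γ * X) - S1) (by simp [hS1])
  have hW0' : constantCoeff W = 0 := by
    rw [hW0, hγ]; simp
  -- solve for V
  obtain ⟨V, hV0, hV⟩ := ode_solve ((lam1 : ℂ) - (lam3 : ℂ)) hμ3 (S2 * W)
      (by simp [hW0'])
  have hW' : (X : ℂ⟦X⟧) ^ 2 * derivative ℂ W + (C (lam1 : ℂ) - C (lam2 : ℂ)) * ((X : ℂ⟦X⟧) * W) = 1 + C γ * X - S1 := by
    rw [← map_sub]; exact hW
  have hV' : (X : ℂ⟦X⟧) ^ 2 * derivative ℂ V + (C (lam1 : ℂ) - C (lam3 : ℂ)) * ((X : ℂ⟦X⟧) * V) = S2 * W := by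
    rw [← map_sub]; exact hV
  -- the change of basis
  haveI : SMulCommClass (PowerSeries ℂ) ℂ E := SMulCommClass.symm _ _ _
  set f : E →ₗ[ℂ⟦X⟧] E := e.constr ℂ ![e 0, e 1 + W • e 0, e 2 + V • e 0] with hf
  set g : E →ₗ[ℂ⟦X⟧] E := e.constr ℂ ![e 0, e 1 - W • e 0, e 2 - V • e 0] with hg
  have hfg : f.comp g = LinearMap.id := by
    apply e.ext; intro i
    fin_cases i <;>
      simp [hf, hg, Module.Basis.constr_basis, map_sub, map_add, map_smul] <;> abel
  have hgf : g.comp f = LinearMap.id := by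
    apply e.ext; intro i
    fin_cases i <;>
      simp [hf, hg, Module.Basis.constr_basis, map_sub, map_add, map_smul] <;> abel
  set ε := e.map (LinearEquiv.ofLinear f g hfg hgf) with hε
  have hε0 : ε 0 = e 0 := by simp [hε, hf]
  have hε1 : ε 1 = e 1 + W • e 0 := by simp [hε, hf]
  have hε2 : ε 2 = e 2 + V • e 0 := by simp [hε, hf]
  refine ⟨ε, ?_, ?_, ?_⟩
  · rw [hε0, he0]
  · rw [hε1, hε0, map_add, ha W (e 0), he0, he1]
    rw [csmul_eq (lam1 : ℂ), csmul_eq (lam2 : ℂ), csmul_eq (lam2 : ℂ)]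
    rw [show (X : ℂ⟦X⟧) ^ 2 * derivative ℂ W = 1 + C γ * X - S1 - (C (lam1 : ℂ) - C (lam2 : ℂ)) * ((X : ℂ⟦X⟧) * W) by rw [← hW']; ring]
    simp only [smul_smul, smul_add, add_smul, sub_smul, one_smul, mul_sub, sub_mul, mul_add, add_mul]
    ring_nf
    abel
  · rw [hε2, hε1, map_add, ha V (e 0), he0, he2]
    rw [csmul_eq (lam1 : ℂ), csmul_eq (lam3 : ℂ), csmul_eq (lam3 : ℂ)]
    rw [show (X : ℂ⟦X⟧) ^ 2 * derivative ℂ V = S2 * W - (C (lam1 : ℂ) - C (lam3 : ℂ)) * ((X : ℂ⟦X⟧) * V) by rw [← hV']; ring]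
    simp only [smul_smul, smul_add, add_smul, sub_smul, one_smul, mul_sub, sub_mul, mul_add, add_mul]
    ring_nf
    abel
end

section
/- Let λ₁ ∈ ℚ, let p₁ ∈ ℕ with p₁ ≥ 2, set λ₂ := λ₁ + p₁ − 1 and λ₃ := λ₂ (i.e. p₂ = 1), and let β ∈ ℂ with β ≠ 0. Let E be a rank-3 (a,b)-module presented by (λ₁,λ₂,λ₂; S₁, 1 + β·X), where S₁ ∈ ℂ⟦X⟧ has constant term 1. Set α := coeff_{p₁} S₁. Then E also admits the normal-form presentation (λ₁,λ₂,λ₂; 1 + α·X^{p₁}, 1 + β·X). -/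
open PowerSeries

/-- Solving the ODE `X²W′ − (p₁−1)XW = G` when the obstruction coefficients
(at `X⁰` and `X^{p₁}`) of `G` vanish. -/
lemma solveODE (p1 : ℕ) (G : PowerSeries ℂ) (h0 : coeff 0 G = 0)
    (hp : coeff p1 G = 0) :
    ∃ W : PowerSeries ℂ, (X:PowerSeries ℂ)^2 * derivative ℂ W
      - C ((p1:ℂ) - 1) * (X * W) = G := by
  set w : ℕ → ℂ := fun m => (coeff (m+1) G) / ((m+1 : ℂ) - p1) with hw
  refine ⟨mk w, ?_⟩
  ext n
  rcases n with _ | m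
  · simp [coeff_X_pow_mul', h0]
  · rw [map_sub, coeff_X_pow_mul', coeff_C_mul, coeff_succ_X_mul, coeff_mk]
    have hfirst : (if 2 ≤ m+1 then coeff (m+1-2) (derivative ℂ (mk w)) else 0)
        = (m:ℂ) * w m := by
      rcases m with _ | k
      · simp
      · rw [if_pos (by omega), show k+1+1-2 = k from rfl, coeff_derivative, coeff_mk]
        push_cast; ring
    rw [hfirst]
    have : (m:ℂ) * w m - ((p1:ℂ) - 1) * w m = (((m:ℕ)+1:ℂ) - p1) * w m := by ring
    rw [this]
    rcases eq_or_ne (m+1) p1 with h | h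
    · subst h
      have : ((m:ℂ)+1) - (m+1:ℕ) = 0 := by push_cast; ring
      rw [this, zero_mul]
      exact hp.symm
    · have hne : ((m:ℂ)+1) - p1 ≠ 0 := by
        rw [sub_ne_zero]
        exact_mod_cast fun hh => h (by exact_mod_cast hh)
      rw [hw]
      field_simp

/-- Triangular change of basis in a rank-3 free module. -/
lemma newBasis (E : Type*) [AddCommGroup E] [Module ℂ E]
    [Module (PowerSeries ℂ) E] [IsScalarTower ℂ (PowerSeries ℂ) E]
    (e : Module.Basis (Fin 3) (PowerSeries ℂ) E) (T V : PowerSeries ℂ) (u : ℂ) :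
    ∃ B : Module.Basis (Fin 3) (PowerSeries ℂ) E,
      B 0 = e 0 ∧ B 1 = e 1 + T • e 0 ∧ B 2 = e 2 + C u • e 1 + V • e 0 := by
  set f : Fin 3 → E := ![e 0, e 1 + T • e 0, e 2 + C u • e 1 + V • e 0] with hf
  set g : Fin 3 → E := ![e 0, e 1 - T • e 0, e 2 - C u • e 1 + (C u * T - V) • e 0] with hg
  have hfin : ∀ i : Fin 3, i = 0 ∨ i = 1 ∨ i = 2 := by decide
  have hf0 : f 0 = e 0 := rfl
  have hf1 : f 1 = e 1 + T • e 0 := rfl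
  have hf2 : f 2 = e 2 + C u • e 1 + V • e 0 := rfl
  have hg0 : g 0 = e 0 := rfl
  have hg1 : g 1 = e 1 - T • e 0 := rfl
  have hg2 : g 2 = e 2 - C u • e 1 + (C u * T - V) • e 0 := rfl
  have hcomp1 : (e.constr ℕ f).comp (e.constr ℕ g) = LinearMap.id := by
    refine e.ext fun i => ?_
    rcases hfin i with h | h | h <;> subst h <;>
      simp only [LinearMap.comp_apply, LinearMap.id_apply, Module.Basis.constr_basis,
        hf0, hf1, hf2, hg0, hg1, hg2, map_add, map_sub, map_smul,
        add_smul, sub_smul, mul_smul, smul_add, smul_sub] <;>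
      abel
  have hcomp2 : (e.constr ℕ g).comp (e.constr ℕ f) = LinearMap.id := by
    refine e.ext fun i => ?_
    rcases hfin i with h | h | h <;> subst h <;>
      simp only [LinearMap.comp_apply, LinearMap.id_apply, Module.Basis.constr_basis,
        hf0, hf1, hf2, hg0, hg1, hg2, map_add, map_sub, map_smul,
        add_smul, sub_smul, mul_smul, smul_add, smul_sub] <;>
      abel
  set B := e.map (LinearEquiv.ofLinear (e.constr ℕ f) (e.constr ℕ g) hcomp1 hcomp2) with hB
  have hFi : ∀ i, B i = f i := fun i => by
    simp [hB, Module.Basis.map_apply, LinearEquiv.ofLinear_apply, Module.Basis.constr_basis]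
  exact ⟨B, by rw [hFi, hf0], by rw [hFi, hf1], by rw [hFi, hf2]⟩

/-- For `p₁ ≥ 2`, `λ₂ = λ₁ + p₁ - 1`, `λ₃ = λ₂` (i.e. `p₂ = 1`)
and `β ≠ 0`, a rank-3 fresco presented by `(λ₁,λ₂,λ₂; S₁, 1 + β·X)` admits the
normal-form presentation `(λ₁,λ₂,λ₂; 1 + α·X^{p₁}, 1 + β·X)` with
`α = coeff_{p₁} S₁`. -/
theorem stmt7 (lam1 : ℚ) (p1 : ℕ) (hp1 : 2 ≤ p1)
    (lam2 : ℚ) (hlam2 : lam2 = lam1 + p1 - 1)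
    (β : ℂ) (hβ : β ≠ 0)
    (E : Type*) [AddCommGroup E] [Module ℂ E]
    [Module (PowerSeries ℂ) E] [IsScalarTower ℂ (PowerSeries ℂ) E]
    (a : E →ₗ[ℂ] E) (ha : IsABStructure E a)
    (S1 : PowerSeries ℂ) (hS1 : constantCoeff S1 = 1)
    (hE : PresentedRank3 E a (lam1 : ℂ) (lam2 : ℂ) (lam2 : ℂ)
      S1 (1 + C β * X))
    (α : ℂ) (hα : α = coeff p1 S1) :
    PresentedRank3 E a (lam1 : ℂ) (lam2 : ℂ) (lam2 : ℂ)
      (1 + C α * X ^ p1) (1 + C β * X) := by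
  obtain ⟨e, he0, he1, he2⟩ := hE
  -- the scalar identity λ₂ = λ₁ + (p₁ - 1)
  have hlamC : (lam2 : ℂ) = (lam1 : ℂ) + ((p1 : ℂ) - 1) := by
    have := congrArg (fun q : ℚ => (q : ℂ)) hlam2
    push_cast at this
    rw [this]; ring
  have hCl : C (lam2 : ℂ) = C (lam1 : ℂ) + C ((p1:ℂ) - 1) := by
    rw [hlamC, map_add]
  -- ℂ-scalar action through power series
  have csmul : ∀ (μ : ℂ) (x : E), μ • ((X : PowerSeries ℂ) • x) = ((C μ) * X) • x := by
    intro μ x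
    rw [← smul_eq_C_mul, smul_assoc]
  -- construct T
  set G1 : PowerSeries ℂ := (1 + C α * X ^ p1) - S1 with hG1
  have h0G1 : coeff 0 G1 = 0 := by
    simp only [hG1, map_sub, coeff_zero_eq_constantCoeff, map_add, map_one, map_mul, map_pow,
      hS1, constantCoeff_C, constantCoeff_X, zero_pow (by omega : p1 ≠ 0), mul_zero, add_zero,
      sub_self]
  have hpG1 : coeff p1 G1 = 0 := by
    simp [hG1, coeff_one, hα]
    omega
  obtain ⟨T0, hT0⟩ := solveODE p1 G1 h0G1 hpG1
  set c : ℂ := (coeff 0 T0 * coeff p1 S1 - coeff p1 T0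
      - β * coeff (p1-1) T0) / β with hc
  set T : PowerSeries ℂ := T0 + C c * X ^ (p1-1) with hTdef
  have hmon : derivative ℂ (C c * X ^ (p1-1) : PowerSeries ℂ)
      = C c * (((p1-1 : ℕ) : PowerSeries ℂ) * X ^ (p1-2)) := by
    rw [Derivation.leibniz, derivative_C, smul_zero, add_zero, Derivation.leibniz_pow,
      derivative_X, smul_eq_mul, smul_eq_mul]
    rw [show p1 - 1 - 1 = p1 - 2 from rfl]
    ring
  have hcastp : ((p1 - 1 : ℕ) : PowerSeries ℂ) = C ((p1:ℂ) - 1) := by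
    rw [← map_natCast (C) (p1-1), Nat.cast_sub (by omega), Nat.cast_one]
  have hpow2 : (X:PowerSeries ℂ)^2 * X ^ (p1-2) = X ^ p1 := by
    rw [← pow_add]; congr 1; omega
  have hpow1 : (X:PowerSeries ℂ) * X ^ (p1-1) = X ^ p1 := by
    rw [← pow_succ']; congr 1; omega
  have hT : (X:PowerSeries ℂ)^2 * derivative ℂ T - C ((p1:ℂ) - 1) * (X * T) = G1 := by
    rw [hTdef, map_add, hmon, hcastp]
    calc (X:PowerSeries ℂ)^2 * (derivative ℂ T0 + C c * (C ((p1:ℂ)-1) * X ^ (p1-2)))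
        - C ((p1:ℂ) - 1) * (X * (T0 + C c * X ^ (p1-1)))
        = ((X:PowerSeries ℂ)^2 * derivative ℂ T0 - C ((p1:ℂ) - 1) * (X * T0))
          + C c * C ((p1:ℂ)-1) * ((X:PowerSeries ℂ)^2 * X^(p1-2) - X * X^(p1-1)) := by
          ring
      _ = G1 := by rw [hpow2, hpow1, sub_self, mul_zero, add_zero, hT0]
  -- construct V
  set u : ℂ := coeff 0 T with hu
  set G2 : PowerSeries ℂ := (1 + C β * X) * T - C u * S1 with hG2
  have h0G2 : coeff 0 G2 = 0 := by
    simp [hG2, coeff_zero_eq_constantCoeff, map_mul, hS1, hu, mul_comm]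
  have hu0 : u = coeff 0 T0 := by
    rw [hu, hTdef, map_add, coeff_C_mul, coeff_X_pow, if_neg (by omega), mul_zero, add_zero]
  have hpG2 : coeff p1 G2 = 0 := by
    have h1 : coeff p1 T = coeff p1 T0 := by
      rw [hTdef, map_add, coeff_C_mul, coeff_X_pow, if_neg (by omega), mul_zero, add_zero]
    have h2 : coeff (p1-1) T = coeff (p1-1) T0 + c := by
      rw [hTdef, map_add, coeff_C_mul, coeff_X_pow, if_pos rfl, mul_one]
    have h3 : coeff p1 ((1 + C β * X) * T) = coeff p1 T + β * coeff (p1-1) T := by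
      rw [add_mul, one_mul, map_add, mul_assoc, coeff_C_mul]
      congr 2
      have h4 := coeff_succ_X_mul (R := ℂ) (p1-1) T
      rw [show p1-1+1 = p1 by omega] at h4
      rw [h4]
    rw [hG2, map_sub, h3, h1, h2, coeff_C_mul, hu0, hc]
    field_simp
    ring
  obtain ⟨V, hV⟩ := solveODE p1 G2 h0G2 hpG2
  -- the two key power-series identities
  have key1 : S1 + T * (C (lam1:ℂ) * X) + (X:PowerSeries ℂ)^2 * derivative ℂ T
      = (C (lam2:ℂ) * X) * T + (1 + C α * X ^ p1) := by
    rw [hG1] at hT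
    linear_combination hT - (X * T) * hCl
  have key2 : C u * S1 + V * (C (lam1:ℂ) * X) + (X:PowerSeries ℂ)^2 * derivative ℂ V
      = (C (lam2:ℂ) * X) * V + (1 + C β * X) * T := by
    rw [hG2] at hV
    linear_combination hV - (X * V) * hCl
  -- new basis
  obtain ⟨B, hB0, hB1, hB2⟩ := newBasis E e T V u
  refine ⟨B, ?_, ?_, ?_⟩
  · rw [hB0]; exact he0
  · rw [hB0, hB1, map_add, ha T (e 0), he0, he1]
    rw [csmul (lam1:ℂ), csmul (lam2:ℂ), csmul (lam2:ℂ)]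
    have lhs_eq : (C (lam2:ℂ) * X) • e 1 + S1 • e 0
          + (T • ((C (lam1:ℂ) * X) • e 0) + ((X:PowerSeries ℂ)^2 * derivative ℂ T) • e 0)
        = (S1 + T * (C (lam1:ℂ) * X) + (X:PowerSeries ℂ)^2 * derivative ℂ T) • e 0
          + (C (lam2:ℂ) * X) • e 1 := by
      simp only [add_smul, sub_smul, mul_smul, smul_add, smul_sub]; abel
    have rhs_eq : (C (lam2:ℂ) * X) • (e 1 + T • e 0) + (1 + C α * X ^ p1) • e 0
        = ((C (lam2:ℂ) * X) * T + (1 + C α * X ^ p1)) • e 0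
          + (C (lam2:ℂ) * X) • e 1 := by
      simp only [add_smul, sub_smul, mul_smul, smul_add, smul_sub]; abel
    rw [lhs_eq, rhs_eq, key1]
  · rw [hB1, hB2, map_add, map_add, ha (C u) (e 1), ha V (e 0), he0, he1, he2]
    rw [derivative_C, mul_zero, zero_smul, add_zero]
    rw [csmul (lam1:ℂ), csmul (lam2:ℂ), csmul (lam2:ℂ), csmul (lam2:ℂ)]
    have lhs_eq : (C (lam2:ℂ) * X) • e 2 + (1 + C β * X) • e 1
          + C u • ((C (lam2:ℂ) * X) • e 1 + S1 • e 0)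
          + (V • ((C (lam1:ℂ) * X) • e 0) + ((X:PowerSeries ℂ)^2 * derivative ℂ V) • e 0)
        = (C u * S1 + V * (C (lam1:ℂ) * X) + (X:PowerSeries ℂ)^2 * derivative ℂ V) • e 0
          + ((C (lam2:ℂ) * X) * C u + (1 + C β * X)) • e 1
          + (C (lam2:ℂ) * X) • e 2 := by
      rw [mul_comm (C (lam2:ℂ) * X) (C u)]
      simp only [add_smul, sub_smul, mul_smul, smul_add, smul_sub]; abel
    have rhs_eq : (C (lam2:ℂ) * X) • (e 2 + C u • e 1 + V • e 0)
          + (1 + C β * X) • (e 1 + T • e 0)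
        = ((C (lam2:ℂ) * X) * V + (1 + C β * X) * T) • e 0
          + ((C (lam2:ℂ) * X) * C u + (1 + C β * X)) • e 1
          + (C (lam2:ℂ) * X) • e 2 := by
      simp only [add_smul, sub_smul, mul_smul, smul_add, smul_sub]; abel
    rw [lhs_eq, rhs_eq, key2]
end

section
/- Let λ₁ ∈ ℚ, let p₁ ∈ ℕ with p₁ ≥ 2, set λ₂ := λ₁ + p₁ − 1 and λ₃ := λ₂ − 1 (i.e. p₂ = 0). Let E be a rank-3 (a,b)-module presented by (λ₁,λ₂,λ₃; S₁, 1), where S₁ ∈ ℂ⟦X⟧ has constant term 1. Set γ := coeff₁ S₁ and α := coeff_{p₁} S₁. Then E also admits the normal-form presentation (λ₁,λ₂,λ₃; 1 + γ·X + α·X^{p₁}, 1). -/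
open PowerSeries

noncomputable def sol (p : ℕ) (B : PowerSeries ℂ) : PowerSeries ℂ :=
  PowerSeries.mk fun m => if m + 1 = p then 0 else coeff (m + 1) B / ((m : ℂ) + 1 - p)

lemma coeff_sol (p : ℕ) (B : PowerSeries ℂ) (m : ℕ) :
    coeff m (sol p B) = if m + 1 = p then 0 else coeff (m + 1) B / ((m : ℂ) + 1 - p) :=
  coeff_mk ..

lemma sol_spec (p : ℕ) (hp : 1 ≤ p) (B : PowerSeries ℂ) (h0 : coeff 0 B = 0)
    (hp0 : coeff p B = 0) :
    (X : PowerSeries ℂ) ^ 2 * derivative ℂ (sol p B)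
      + C (1 - (p : ℂ)) * ((X : PowerSeries ℂ) * sol p B) = B := by
  ext n
  rw [map_add, coeff_C_mul]
  match n with
  | 0 =>
    rw [h0]
    rw [show ((X : PowerSeries ℂ) * sol p B) = X ^ 1 * sol p B by ring]
    rw [coeff_X_pow_mul', coeff_X_pow_mul']
    simp
  | 1 =>
    rw [show ((X : PowerSeries ℂ) * sol p B) = X ^ 1 * sol p B by ring]
    rw [coeff_X_pow_mul', coeff_X_pow_mul']
    simp only [if_neg (by norm_num : ¬ (2 ≤ 1)), if_pos (le_refl 1), zero_add]
    rw [coeff_sol]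
    rcases eq_or_ne p 1 with h | h
    · subst h; simpa using hp0.symm
    · rw [if_neg (by omega)]
      have hne : (1 : ℂ) - (p : ℂ) ≠ 0 :=
        sub_ne_zero_of_ne (by exact_mod_cast (Ne.symm h))
      norm_num
      field_simp
  | (m + 2) =>
    rw [show ((X : PowerSeries ℂ) * sol p B) = X ^ 1 * sol p B by ring]
    rw [show (m + 2) = m + 2 by rfl]
    rw [coeff_X_pow_mul', coeff_X_pow_mul']
    rw [if_pos (by omega), if_pos (by omega)]
    have e1 : m + 2 - 2 = m := by omega
    have e2 : m + 2 - 1 = m + 1 := by omega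
    rw [e1, e2, coeff_derivative, coeff_sol]
    rcases eq_or_ne (m + 2) p with h | h
    · rw [if_pos (by omega)]
      rw [← h] at hp0
      simpa using hp0.symm
    · rw [if_neg (by omega)]
      have hne : ((m : ℂ) + 1) + 1 - (p : ℂ) ≠ 0 := by
        have : ((m + 2 : ℕ) : ℂ) ≠ (p : ℂ) := by exact_mod_cast h
        push_cast at this
        intro hc; apply this; linear_combination hc
      push_cast
      field_simp
      ring

/-- For `p₁ ≥ 2`, `λ₂ = λ₁ + p₁ - 1`, `λ₃ = λ₂ - 1`
(i.e. `p₂ = 0`), a rank-3 fresco presented by `(λ₁,λ₂,λ₃; S₁, 1)` admits the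
normal-form presentation `(λ₁,λ₂,λ₃; 1 + γ·X + α·X^{p₁}, 1)` with
`γ = coeff₁ S₁`, `α = coeff_{p₁} S₁`. -/
theorem stmt8 (lam1 : ℚ) (p1 : ℕ) (hp1 : 2 ≤ p1)
    (lam2 lam3 : ℚ) (hlam2 : lam2 = lam1 + p1 - 1) (hlam3 : lam3 = lam2 - 1)
    (E : Type*) [AddCommGroup E] [Module ℂ E]
    [Module (PowerSeries ℂ) E] [IsScalarTower ℂ (PowerSeries ℂ) E]
    (a : E →ₗ[ℂ] E) (ha : IsABStructure E a)
    (S1 : PowerSeries ℂ) (hS1 : constantCoeff S1 = 1)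
    (hE : PresentedRank3 E a (lam1 : ℂ) (lam2 : ℂ) (lam3 : ℂ) S1 1)
    (γ α : ℂ) (hγ : γ = coeff 1 S1) (hα : α = coeff p1 S1) :
    PresentedRank3 E a (lam1 : ℂ) (lam2 : ℂ) (lam3 : ℂ)
      (1 + C γ * X + C α * X ^ p1) 1 := by
  classical
  obtain ⟨e, he0, he1, he2⟩ := hE
  set T : PowerSeries ℂ := 1 + C γ * X + C α * X ^ p1 with hT
  set W : PowerSeries ℂ := sol p1 (T - S1) with hWdef
  set Rs : PowerSeries ℂ := sol (p1 - 1) W with hRdef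
  -- coefficients of T
  have hT0 : coeff 0 T = 1 := by
    simp [hT, coeff_X_pow, coeff_X, show p1 ≠ 0 by omega]
  have hT1 : coeff 1 T = γ := by
    simp [hT, coeff_X_pow, coeff_X, coeff_one, show ¬ (1 = p1) by omega]
  have hTp : coeff p1 T = α := by
    simp [hT, coeff_X_pow, coeff_X, coeff_one, show p1 ≠ 0 by omega, show ¬ (p1 = 1) by omega]
  have key1 : (X : PowerSeries ℂ) ^ 2 * derivative ℂ W
      + C (1 - (p1 : ℂ)) * ((X : PowerSeries ℂ) * W) = T - S1 := by
    apply sol_spec p1 (by omega)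
    · rw [map_sub, hT0, coeff_zero_eq_constantCoeff, hS1, sub_self]
    · rw [map_sub, hTp, ← hα, sub_self]
  have hW0 : coeff 0 W = 0 := by
    rw [hWdef, coeff_sol, if_neg (by omega), map_sub, hT1, ← hγ, sub_self, zero_div]
  have hWp : coeff (p1 - 1) W = 0 := by
    rw [hWdef, coeff_sol, if_pos (by omega)]
  have key2 : (X : PowerSeries ℂ) ^ 2 * derivative ℂ Rs
      + C (1 - ((p1 - 1 : ℕ) : ℂ)) * ((X : PowerSeries ℂ) * Rs) = W :=
    sol_spec (p1 - 1) (by omega) W hW0 hWp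
  have hcast : ((p1 - 1 : ℕ) : ℂ) = (p1 : ℂ) - 1 := by
    push_cast [Nat.cast_sub (by omega : 1 ≤ p1)]; ring
  rw [hcast] at key2
  rw [show (1 : ℂ) - ((p1 : ℂ) - 1) = 2 - (p1 : ℂ) by ring] at key2
  -- scalar relations
  have hl2 : (lam2 : ℂ) = (lam1 : ℂ) + (p1 : ℂ) - 1 := by exact_mod_cast hlam2
  have hl3 : (lam3 : ℂ) = (lam2 : ℂ) - 1 := by exact_mod_cast hlam3
  clear_value T W Rs
  -- the change-of-basis maps
  set F : E →ₗ[PowerSeries ℂ] E :=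
    e.constr ℂ ![e 0, e 1 + W • e 0, e 2 + Rs • e 0] with hF
  set G : E →ₗ[PowerSeries ℂ] E :=
    e.constr ℂ ![e 0, e 1 - W • e 0, e 2 - Rs • e 0] with hG
  have hFG : F.comp G = LinearMap.id := by
    apply Module.Basis.ext e
    intro i
    fin_cases i <;>
      simp [hF, hG, Module.Basis.constr_basis, map_add, map_sub, map_smul]
  have hGF : G.comp F = LinearMap.id := by
    apply Module.Basis.ext e
    intro i
    fin_cases i <;>
      simp [hF, hG, Module.Basis.constr_basis, map_add, map_sub, map_smul]
  set φ : E ≃ₗ[PowerSeries ℂ] E := LinearEquiv.ofLinear F G hFG hGF with hφ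
  refine ⟨e.map φ, ?_, ?_, ?_⟩
  · have h0 : (e.map φ) 0 = e 0 := by
      simp [hφ, Module.Basis.map_apply, hF, Module.Basis.constr_basis]
    rw [h0]; exact he0
  · have h1 : (e.map φ) 1 = e 1 + W • e 0 := by
      simp [hφ, Module.Basis.map_apply, hF, Module.Basis.constr_basis]
    have h0 : (e.map φ) 0 = e 0 := by
      simp [hφ, Module.Basis.map_apply, hF, Module.Basis.constr_basis]
    rw [h1, h0, map_add, ha W (e 0), he1, he0]
    have hd : (X : PowerSeries ℂ) ^ 2 * derivative ℂ W
        = (T - S1) - C (1 - (p1 : ℂ)) * ((X : PowerSeries ℂ) * W) := by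
      linear_combination key1
    rw [hd]
    have hsc : C ((lam1 : ℂ)) - C (1 - (p1 : ℂ)) = C ((lam2 : ℂ)) := by
      rw [← map_sub]; congr 1; rw [hl2]; ring
    simp only [smul_add, ← algebraMap_smul (PowerSeries ℂ) ((lam1 : ℂ)),
      ← algebraMap_smul (PowerSeries ℂ) ((lam2 : ℂ)), smul_smul]
    have key : W * (algebraMap ℂ (PowerSeries ℂ) (lam1 : ℂ) * X)
        + (T - S1 - C (1 - (p1 : ℂ)) * (X * W))
        = algebraMap ℂ (PowerSeries ℂ) (lam2 : ℂ) * (X * W) + T - S1 := by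
      simp only [PowerSeries.algebraMap_apply, Algebra.algebraMap_self, RingHom.id_apply]
      linear_combination (X * W) * hsc
    have h' : (W * (algebraMap ℂ (PowerSeries ℂ) (lam1 : ℂ) * X)) • e 0
        + (T - S1 - C (1 - (p1 : ℂ)) * (X * W)) • e 0
        = (algebraMap ℂ (PowerSeries ℂ) (lam2 : ℂ) * (X * W)) • e 0 + T • e 0 - S1 • e 0 := by
      rw [← add_smul, key, sub_smul, add_smul]
    rw [h']; abel
  · have h2 : (e.map φ) 2 = e 2 + Rs • e 0 := by
      simp [hφ, Module.Basis.map_apply, hF, Module.Basis.constr_basis]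
    have h1 : (e.map φ) 1 = e 1 + W • e 0 := by
      simp [hφ, Module.Basis.map_apply, hF, Module.Basis.constr_basis]
    rw [h2, h1, map_add, ha Rs (e 0), he2, he0]
    have hd : (X : PowerSeries ℂ) ^ 2 * derivative ℂ Rs
        = W - C (2 - (p1 : ℂ)) * ((X : PowerSeries ℂ) * Rs) := by
      linear_combination key2
    rw [hd]
    have hsc : C ((lam1 : ℂ)) - C (2 - (p1 : ℂ)) = C ((lam3 : ℂ)) := by
      rw [← map_sub]; congr 1; rw [hl3, hl2]; ring
    simp only [smul_add, one_smul, ← algebraMap_smul (PowerSeries ℂ) ((lam1 : ℂ)),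
      ← algebraMap_smul (PowerSeries ℂ) ((lam3 : ℂ)), smul_smul, one_mul]
    have key : Rs * (algebraMap ℂ (PowerSeries ℂ) (lam1 : ℂ) * X)
        + (W - C (2 - (p1 : ℂ)) * (X * Rs))
        = algebraMap ℂ (PowerSeries ℂ) (lam3 : ℂ) * (X * Rs) + W := by
      simp only [PowerSeries.algebraMap_apply, Algebra.algebraMap_self, RingHom.id_apply]
      linear_combination (X * Rs) * hsc
    have h' : (Rs * (algebraMap ℂ (PowerSeries ℂ) (lam1 : ℂ) * X)) • e 0
        + (W - C (2 - (p1 : ℂ)) * (X * Rs)) • e 0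
        = (algebraMap ℂ (PowerSeries ℂ) (lam3 : ℂ) * (X * Rs)) • e 0 + W • e 0 := by
      rw [← add_smul, key, add_smul]
    rw [h']; abel
end

section
/- Let λ₁ ∈ ℚ, set λ₂ := λ₁ (i.e. p₁ = 1), let p₂ ∈ ℕ with p₂ ≥ 2, set λ₃ := λ₂ + p₂ − 1, and let β ∈ ℂ. Let E be a rank-3 (a,b)-module presented by (λ₁,λ₁,λ₃; S₁, 1 + β·X^{p₂}), where S₁ ∈ ℂ⟦X⟧ has constant term 1, and suppose α := coeff₁ S₁ is nonzero. Then E also admits the normal-form presentation (λ₁,λ₁,λ₃; 1 + α·X, 1 + β·X^{p₂}). -/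
open PowerSeries

noncomputable def Tser (S1 : PowerSeries ℂ) : PowerSeries ℂ :=
  PowerSeries.mk fun m => if m = 0 then 0 else -(coeff (m+1) S1) / (m : ℂ)

lemma star1 (S1 : PowerSeries ℂ) (hS1 : constantCoeff S1 = 1) :
    S1 + X^2 * derivative ℂ (Tser S1) = 1 + C (coeff 1 S1) * X := by
  ext n
  rcases n with _ | _ | k
  · simp [coeff_X_pow_mul']
    simpa using hS1
  · simp [coeff_X_pow_mul']
  · rw [map_add, map_add]
    have h1 : coeff (k+2) ((X:PowerSeries ℂ)^2 * derivative ℂ (Tser S1)) =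
        coeff k (derivative ℂ (Tser S1)) := coeff_X_pow_mul _ 2 k
    rw [h1, coeff_derivative, Tser, coeff_mk, if_neg (Nat.succ_ne_zero k)]
    have hk : ((k:ℂ)+1) ≠ 0 := Nat.cast_add_one_ne_zero k
    field_simp
    push_cast
    simp [coeff_one, coeff_C_mul, coeff_X]

lemma deriv_C_mul_X_pow (c : ℂ) (n : ℕ) :
    derivative ℂ (C c * X^(n+1)) = C (c*(n+1)) * X^n := by
  ext m
  rw [coeff_derivative, coeff_C_mul_X_pow, coeff_C_mul_X_pow]
  by_cases h : m = n
  · subst h; simp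
  · rw [if_neg (by omega), if_neg h, zero_mul]

noncomputable def Vser (G : PowerSeries ℂ) (p2 : ℕ) : PowerSeries ℂ :=
  PowerSeries.mk fun n => if n = p2 - 1 then 0
    else coeff (n+1) G / ((n:ℂ) - ((p2 - 1 : ℕ) : ℂ))

lemma star3 (G : PowerSeries ℂ) (p2 : ℕ) (hp2 : 1 ≤ p2)
    (h0 : coeff 0 G = 0) (hcrit : coeff p2 G = 0) :
    X^2 * derivative ℂ (Vser G p2) + C (1 - (p2:ℂ)) * X * Vser G p2 = G := by
  have hXV : ∀ n : ℕ, coeff (n+1) ((X:PowerSeries ℂ) * Vser G p2)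
      = coeff n (Vser G p2) := by
    intro n
    simpa using coeff_X_pow_mul (Vser G p2) 1 n
  ext n
  rcases n with _ | _ | k
  · simp [coeff_X_pow_mul', mul_assoc, coeff_C_mul, h0]
  · -- n = 1
    rw [map_add, coeff_X_pow_mul', if_neg (by norm_num), mul_assoc,
      coeff_C_mul, hXV 0, Vser, coeff_mk]
    by_cases h : (0:ℕ) = p2 - 1
    · have : p2 = 1 := by omega
      subst this
      rw [if_pos h, mul_zero]
      simpa using hcrit.symm
    · rw [if_neg h, Nat.cast_sub hp2]
      have h1p : (1:ℂ) - (p2:ℂ) ≠ 0 := by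
        have hp2' : p2 ≠ 1 := by omega
        rw [sub_ne_zero]
        exact fun hc => hp2' (by exact_mod_cast hc.symm)
      push_cast
      have hne : (0:ℂ) - ((p2:ℂ) - 1) ≠ 0 := by
        intro hc; exact h1p (by linear_combination hc)
      field_simp
      ring
  · -- n = k+2
    rw [map_add]
    have h1 : coeff (k+2) ((X:PowerSeries ℂ)^2 * derivative ℂ (Vser G p2)) =
        coeff k (derivative ℂ (Vser G p2)) := coeff_X_pow_mul _ 2 k
    rw [h1, coeff_derivative, mul_assoc, coeff_C_mul, hXV (k+1),
      Vser, coeff_mk]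
    by_cases h : k + 1 = p2 - 1
    · have hp : p2 = k + 2 := by omega
      rw [if_pos h]
      subst hp
      simpa using hcrit.symm
    · rw [if_neg h, Nat.cast_sub hp2]
      have hne : ((k:ℕ):ℂ) + 1 - ((p2:ℂ) - 1) ≠ 0 := by
        intro hc
        apply h
        have : ((k+2:ℕ):ℂ) = ((p2:ℕ):ℂ) := by push_cast; linear_combination hc
        have h2 : k + 2 = p2 := by exact_mod_cast this
        omega
      push_cast at hne ⊢
      field_simp
      ring

lemma star2 (w : ℂ) (p2 : ℕ) (hp2 : 2 ≤ p2) :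
    (X:PowerSeries ℂ)^2 * derivative ℂ (C w * X^(p2-1))
      = C ((p2:ℂ) - 1) * X * (C w * X^(p2-1)) := by
  obtain ⟨q, rfl⟩ : ∃ q, p2 = q + 2 := ⟨p2 - 2, by omega⟩
  have hq : q + 2 - 1 = q + 1 := rfl
  rw [hq, deriv_C_mul_X_pow]
  have hc : ((q+2:ℕ):ℂ) - 1 = ((q:ℕ):ℂ) + 1 := by push_cast; ring
  rw [hc]
  have hC : C (w * (((q:ℕ):ℂ) + 1)) = C (((q:ℕ):ℂ) + 1) * C w := by
    rw [← map_mul, mul_comm]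
  linear_combination ((X:PowerSeries ℂ)^(q+2)) * hC

lemma hG0 (S1 : PowerSeries ℂ) (β : ℂ) (p2 : ℕ) (hp2 : 2 ≤ p2) (c : ℂ) :
    coeff 0 ((1 + C β * X^p2) * Tser S1 - S1 * (C c * X^(p2-1))) = 0 := by
  have h1 : constantCoeff (Tser S1) = 0 := by simp [Tser]
  have h2 : constantCoeff ((X:PowerSeries ℂ)^(p2-1)) = 0 := by
    rw [map_pow, constantCoeff_X, zero_pow (by omega)]
  simp [coeff_zero_eq_constantCoeff, map_sub, map_mul, h1, h2]

lemma hGp2 (S1 : PowerSeries ℂ) (β α : ℂ) (p2 : ℕ) (hp2 : 2 ≤ p2)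
    (hα : α = coeff 1 S1) (hα0 : α ≠ 0) :
    coeff p2 ((1 + C β * X^p2) * Tser S1
      - S1 * (C (coeff p2 (Tser S1) / α) * X^(p2-1))) = 0 := by
  have e1 : (1 + C β * X^p2) * Tser S1
      = Tser S1 + C β * ((X:PowerSeries ℂ)^p2 * Tser S1) := by ring
  have e2 : S1 * (C (coeff p2 (Tser S1) / α) * X^(p2-1))
      = C (coeff p2 (Tser S1) / α) * (S1 * (X:PowerSeries ℂ)^(p2-1)) := by ring
  rw [map_sub, e1, e2, map_add, coeff_C_mul, coeff_C_mul]
  have h3 : coeff p2 ((X:PowerSeries ℂ)^p2 * Tser S1) = coeff 0 (Tser S1) := by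
    simpa using coeff_X_pow_mul (Tser S1) p2 0
  have h4 : coeff p2 (S1 * (X:PowerSeries ℂ)^(p2-1)) = coeff 1 S1 := by
    have := coeff_mul_X_pow S1 (p2-1) 1
    rwa [show 1 + (p2-1) = p2 by omega] at this
  rw [h3, h4, ← hα]
  simp [Tser]
  field_simp
  simp

/-- For `λ₂ = λ₁` (i.e. `p₁ = 1`), `p₂ ≥ 2`,
`λ₃ = λ₂ + p₂ - 1`, a rank-3 fresco presented by `(λ₁,λ₁,λ₃; S₁, 1 + β·X^{p₂})`
with `α = coeff₁ S₁ ≠ 0` admits the normal-form presentation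
`(λ₁,λ₁,λ₃; 1 + α·X, 1 + β·X^{p₂})`. -/
theorem stmt9 (lam1 : ℚ) (p2 : ℕ) (hp2 : 2 ≤ p2)
    (lam3 : ℚ) (hlam3 : lam3 = lam1 + p2 - 1)
    (β : ℂ)
    (E : Type*) [AddCommGroup E] [Module ℂ E]
    [Module (PowerSeries ℂ) E] [IsScalarTower ℂ (PowerSeries ℂ) E]
    (a : E →ₗ[ℂ] E) (ha : IsABStructure E a)
    (S1 : PowerSeries ℂ) (hS1 : constantCoeff S1 = 1)
    (hE : PresentedRank3 E a (lam1 : ℂ) (lam1 : ℂ) (lam3 : ℂ)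
      S1 (1 + C β * X ^ p2))
    (α : ℂ) (hα : α = coeff 1 S1) (hα0 : α ≠ 0) :
    PresentedRank3 E a (lam1 : ℂ) (lam1 : ℂ) (lam3 : ℂ)
      (1 + C α * X) (1 + C β * X ^ p2) := by
  obtain ⟨e, he0, he1, he2⟩ := hE
  have hsm : ∀ (c : ℂ) (v : E), c • v = (C c) • v := by
    intro c v
    rw [← algebraMap_smul (PowerSeries ℂ) c v, PowerSeries.algebraMap_apply]
    simp
  set T : PowerSeries ℂ := Tser S1 with hTdef
  set w : ℂ := coeff p2 (Tser S1) / α with hwdef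
  set W : PowerSeries ℂ := C w * X^(p2-1) with hWdef
  set G : PowerSeries ℂ := (1 + C β * X^p2) * T - S1 * W with hGdef
  set V : PowerSeries ℂ := Vser G p2 with hVdef
  have k1 : S1 + X^2 * derivative ℂ T = 1 + C α * X := by
    rw [hα]; exact star1 S1 hS1
  have k2 : (X:PowerSeries ℂ)^2 * derivative ℂ W
      = (C (p2:ℂ) - 1) * X * W := by
    have := star2 w p2 hp2
    rwa [map_sub, map_one] at this
  have k3 : X^2 * derivative ℂ V + (1 - C (p2:ℂ)) * X * V = G := by
    have := star3 G p2 (by omega) (hG0 S1 β p2 hp2 w) (hGp2 S1 β α p2 hp2 hα hα0)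
    rwa [map_sub, map_one] at this
  have hlam3c : (lam3:ℂ) = (lam1:ℂ) + (p2:ℂ) - 1 := by
    rw [hlam3]; push_cast; ring
  have hC3 : C (lam3:ℂ) = C (lam1:ℂ) + C (p2:ℂ) - 1 := by
    rw [hlam3c, map_sub, map_add, map_one]
  haveI : SMulCommClass (PowerSeries ℂ) (PowerSeries ℂ) E :=
    ⟨fun r s x => by rw [smul_smul, smul_smul, mul_comm]⟩
  letI : Algebra ℕ (PowerSeries ℂ) := Semiring.toNatAlgebra
  letI : Algebra ℤ (PowerSeries ℂ) := Ring.toIntAlgebra (PowerSeries ℂ)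
  let f : Fin 3 → E := ![e 0, e 1 + T • e 0, e 2 + W • e 1 + V • e 0]
  let g : Fin 3 → E := ![e 0, e 1 - T • e 0, e 2 - W • e 1 + (W*T - V) • e 0]
  let φ : E →ₗ[PowerSeries ℂ] E := e.constr (PowerSeries ℂ) f
  let ψ : E →ₗ[PowerSeries ℂ] E := e.constr (PowerSeries ℂ) g
  have hφ : ∀ i, φ (e i) = f i := fun i => e.constr_basis _ f i
  have hψ : ∀ i, ψ (e i) = g i := fun i => e.constr_basis _ g i
  have h1 : φ.comp ψ = LinearMap.id := by
    apply e.ext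
    intro i
    fin_cases i <;>
      simp [φ, ψ, f, g, Module.Basis.constr_basis, map_sub, map_add, map_smul,
        smul_sub, smul_add, smul_smul] <;> module
  have h2 : ψ.comp φ = LinearMap.id := by
    apply e.ext
    intro i
    fin_cases i <;>
      simp [φ, ψ, f, g, Module.Basis.constr_basis, map_sub, map_add, map_smul,
        smul_sub, smul_add, smul_smul] <;> module
  let equiv : E ≃ₗ[PowerSeries ℂ] E := LinearEquiv.ofLinear φ ψ h1 h2
  let e' : Module.Basis (Fin 3) (PowerSeries ℂ) E := e.map equiv
  have hE0 : e' 0 = e 0 := by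
    simp only [e', Module.Basis.map_apply, equiv, LinearEquiv.ofLinear_apply, hφ, f,
      Matrix.cons_val_zero]
  have hE1 : e' 1 = e 1 + T • e 0 := by
    simp only [e', Module.Basis.map_apply, equiv, LinearEquiv.ofLinear_apply, hφ, f,
      Matrix.cons_val_one, Matrix.head_cons, Matrix.cons_val_zero]
  have hE2 : e' 2 = e 2 + W • e 1 + V • e 0 := by
    simp only [e', Module.Basis.map_apply, equiv, LinearEquiv.ofLinear_apply, hφ, f,
      Matrix.cons_val_two, Matrix.tail_cons, Matrix.head_cons]
  refine ⟨e', ?_, ?_, ?_⟩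
  · rw [hE0]; exact he0
  · rw [hE1, hE0, map_add, ha T (e 0), he0, he1]
    simp only [hsm, smul_add, smul_smul]
    match_scalars
    · ring
    · linear_combination k1
  · rw [hGdef] at k3
    rw [hE2, hE1, map_add, map_add, ha W (e 1), ha V (e 0), he0, he1, he2]
    simp only [hsm, smul_add, smul_smul]
    match_scalars
    · ring
    · linear_combination k2 - X * W * hC3
    · linear_combination k3 - X * V * hC3
end

section
/- Let M be a ℂ⟦X⟧-module equipped with a ℂ-linear endomorphism a satisfying a(S • x) = S • (a x) + (X² * S′) • x for all S ∈ ℂ⟦X⟧ and x ∈ M. For every polynomial θ ∈ ℂ[Y], define α := θ(a) (evaluation of θ at the endomorphism a) and β : M → M by β(x) := X • (θ′(a)(x)), where θ′ is the derivative of θ. Then α ∘ β − β ∘ α = β ∘ β as ℂ-linear endomorphisms of M. -/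
open PowerSeries

section Aux

variable {M : Type*} [AddCommGroup M] [Module ℂ M]
    [Module (PowerSeries ℂ) M] [IsScalarTower ℂ (PowerSeries ℂ) M]
    (a : M →ₗ[ℂ] M)
    (ha : ∀ (S : PowerSeries ℂ) (x : M),
      a (S • x) = S • a x + ((X : PowerSeries ℂ) ^ 2 * derivative ℂ S) • x)

include ha

lemma stmt10_hb (y : M) : a ((X : PowerSeries ℂ) • y)
    = (X : PowerSeries ℂ) • a y + (X : PowerSeries ℂ) • ((X : PowerSeries ℂ) • y) := by
  have := ha X y
  simpa [smul_smul, pow_two] using this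

lemma stmt10_pow (n : ℕ) (x : M) :
    (a ^ (n+1)) ((X : PowerSeries ℂ) • x)
      = (X : PowerSeries ℂ) • (a ^ (n+1)) x
        + (n+1) • ((X : PowerSeries ℂ) • (a ^ n) ((X : PowerSeries ℂ) • x)) := by
  induction n generalizing x with
  | zero => simpa using stmt10_hb a ha x
  | succ n ih =>
    have hstep : ∀ m : ℕ, (a ^ (m+1)) = a * a ^ m := fun m => pow_succ' a m
    rw [hstep (n+1), Module.End.mul_apply, ih, map_add, map_nsmul,
      stmt10_hb a ha, stmt10_hb a ha, ← Module.End.mul_apply a (a ^ (n+1)),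
      ← hstep (n+1)]
    rw [show a ((a ^ n) ((X : PowerSeries ℂ) • x))
        = (a ^ (n+1)) ((X : PowerSeries ℂ) • x) by
      rw [hstep n, Module.End.mul_apply]]
    rw [ih]
    have hXn : ∀ (m : ℕ) (v : M),
        (X : PowerSeries ℂ) • (m • v) = m • ((X : PowerSeries ℂ) • v) :=
      fun m v => smul_comm _ _ _
    simp only [smul_add, hXn]
    simp only [← natCast_zsmul]
    push_cast
    generalize (X : PowerSeries ℂ) • (a ^ (n + 1 + 1)) x = t
    generalize (X : PowerSeries ℂ) • (X : PowerSeries ℂ) • (a ^ (n + 1)) x = u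
    generalize (X : PowerSeries ℂ) • (X : PowerSeries ℂ) • (a ^ n) ((X : PowerSeries ℂ) • x) = w
    module

end Aux

section Aux2

variable {M : Type*} [AddCommGroup M] [Module ℂ M]
    [Module (PowerSeries ℂ) M] [IsScalarTower ℂ (PowerSeries ℂ) M]
    (a : M →ₗ[ℂ] M)
    (ha : ∀ (S : PowerSeries ℂ) (x : M),
      a (S • x) = S • a x + ((X : PowerSeries ℂ) ^ 2 * derivative ℂ S) • x)

include ha

lemma stmt10_aeval (p : Polynomial ℂ) (x : M) :
    (Polynomial.aeval a p) ((X : PowerSeries ℂ) • x)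
      = (X : PowerSeries ℂ) • (Polynomial.aeval a p) x
        + (X : PowerSeries ℂ) •
            (Polynomial.aeval a p.derivative) ((X : PowerSeries ℂ) • x) := by
  induction p using Polynomial.induction_on' with
  | add p q hp hq =>
    simp only [map_add, LinearMap.add_apply, hp, hq, smul_add]
    abel
  | monomial n c =>
    rcases n with _ | m
    · simp only [Polynomial.derivative_monomial, Nat.cast_zero, zero_add,
        Nat.zero_eq, mul_zero, Polynomial.monomial_zero_right, map_zero,
        LinearMap.zero_apply, smul_zero, add_zero]
      simp [Polynomial.aeval_monomial]
      exact smul_comm c _ x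
    · have key := stmt10_pow a ha m x
      have hc : (Polynomial.aeval a (Polynomial.monomial (m+1) c))
          = c • (a ^ (m+1)) := by
        simp [Polynomial.aeval_monomial, Algebra.algebraMap_eq_smul_one, smul_mul_assoc]
      have hd : (Polynomial.monomial (m+1) c).derivative
          = Polynomial.monomial m (c * (m+1)) := by
        simp [Polynomial.derivative_monomial]
      have hd' : (Polynomial.aeval a (Polynomial.monomial m (c * (m+1))))
          = (c * (m+1)) • (a ^ m) := by
        simp [Polynomial.aeval_monomial, Algebra.algebraMap_eq_smul_one, smul_mul_assoc]
      rw [hc, hd, hd']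
      simp only [LinearMap.smul_apply, key, smul_add]
      have hcomm : ∀ (r : ℂ) (v : M),
          r • (X : PowerSeries ℂ) • v = (X : PowerSeries ℂ) • r • v :=
        fun r v => smul_comm r _ v
      simp only [← Nat.cast_smul_eq_nsmul ℂ, Nat.cast_add, Nat.cast_one, hcomm,
        smul_smul, mul_comm]

end Aux2

/-- For an endomorphism `a` of a `ℂ⟦X⟧`-module `M` satisfying
`a (S • x) = S • a x + (X² * S′) • x`, and a polynomial `θ`, setting
`α := θ(a)` and `β : x ↦ X • θ′(a) x`, one has `α∘β - β∘α = β∘β`. -/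
theorem stmt10 (M : Type*) [AddCommGroup M] [Module ℂ M]
    [Module (PowerSeries ℂ) M] [IsScalarTower ℂ (PowerSeries ℂ) M]
    (a : M →ₗ[ℂ] M)
    (ha : ∀ (S : PowerSeries ℂ) (x : M),
      a (S • x) = S • a x + ((X : PowerSeries ℂ) ^ 2 * derivative ℂ S) • x)
    (θ : Polynomial ℂ) :
    ∀ x : M,
      (Polynomial.aeval a θ)
          ((X : PowerSeries ℂ) • (Polynomial.aeval a θ.derivative) x)
        - (X : PowerSeries ℂ) •
            (Polynomial.aeval a θ.derivative) ((Polynomial.aeval a θ) x)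
      = (X : PowerSeries ℂ) •
          (Polynomial.aeval a θ.derivative)
            ((X : PowerSeries ℂ) • (Polynomial.aeval a θ.derivative) x) := by
  intro x
  have hcomm : (Polynomial.aeval a θ) ((Polynomial.aeval a θ.derivative) x)
      = (Polynomial.aeval a θ.derivative) ((Polynomial.aeval a θ) x) := by
    have : Polynomial.aeval a θ * Polynomial.aeval a θ.derivative
        = Polynomial.aeval a θ.derivative * Polynomial.aeval a θ := by
      rw [← map_mul, ← map_mul, mul_comm]
    calc (Polynomial.aeval a θ) ((Polynomial.aeval a θ.derivative) x)
        = (Polynomial.aeval a θ * Polynomial.aeval a θ.derivative) x := rfl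
      _ = (Polynomial.aeval a θ.derivative * Polynomial.aeval a θ) x := by rw [this]
      _ = _ := rfl
  rw [stmt10_aeval a ha θ, hcomm]
  abel
end

section
/- Let M be a ℂ⟦X⟧-module equipped with a ℂ-linear endomorphism a satisfying a(S • x) = S • (a x) + (X² * S′) • x for all S ∈ ℂ⟦X⟧ and x ∈ M. For every polynomial T ∈ ℂ[Y] and every x ∈ M, one has T(a)(X • x) = X • (T(a)(x)) + X • (T′(a)(X • x)), where T(a) and T′(a) denote evaluation of T and its derivative T′ at the endomorphism a. In particular, for every n ∈ ℕ, aⁿ(X • x) = X • (aⁿ x) + n · (X • (aⁿ⁻¹(X • x))). -/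
open PowerSeries

/-- For an endomorphism `a` of a `ℂ⟦X⟧`-module `M` satisfying
`a (S • x) = S • a x + (X² * S′) • x`, and any polynomial `T`:
`T(a)(X • x) = X • T(a)(x) + X • T′(a)(X • x)`.  In particular
`aⁿ(X • x) = X • aⁿ x + n • (X • aⁿ⁻¹ (X • x))`. -/
theorem stmt11 (M : Type*) [AddCommGroup M] [Module ℂ M]
    [Module (PowerSeries ℂ) M] [IsScalarTower ℂ (PowerSeries ℂ) M]
    (a : M →ₗ[ℂ] M)
    (ha : ∀ (S : PowerSeries ℂ) (x : M),
      a (S • x) = S • a x + ((X : PowerSeries ℂ) ^ 2 * derivative ℂ S) • x) :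
    (∀ (T : Polynomial ℂ) (x : M),
      (Polynomial.aeval a T) ((X : PowerSeries ℂ) • x)
        = (X : PowerSeries ℂ) • (Polynomial.aeval a T) x
          + (X : PowerSeries ℂ) •
              (Polynomial.aeval a T.derivative) ((X : PowerSeries ℂ) • x))
    ∧
    (∀ (n : ℕ) (x : M),
      (a ^ n) ((X : PowerSeries ℂ) • x)
        = (X : PowerSeries ℂ) • (a ^ n) x
          + n • ((X : PowerSeries ℂ) • (a ^ (n - 1)) ((X : PowerSeries ℂ) • x))) := by
  have key : ∀ y : M, a ((X : PowerSeries ℂ) • y)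
      = (X : PowerSeries ℂ) • a y + (X : PowerSeries ℂ) • ((X : PowerSeries ℂ) • y) := by
    intro y
    rw [ha X y, derivative_X, mul_one, sq, mul_smul]
  have hp : ∀ (k : ℕ) (y : M), (a ^ (k+1)) y = a ((a ^ k) y) := by
    intro k y
    rw [pow_succ']
    rfl
  have hS : ∀ (n : ℕ) (x : M), (a ^ (n+1)) ((X : PowerSeries ℂ) • x)
      = (X : PowerSeries ℂ) • (a ^ (n+1)) x
        + ((n:ℕ)+1) • ((X : PowerSeries ℂ) • (a ^ n) ((X : PowerSeries ℂ) • x)) := by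
    intro n
    induction n with
    | zero =>
      intro x
      simpa using key x
    | succ n ih =>
      intro x
      conv_lhs => rw [hp (n+1), ih x]
      rw [map_add, map_nsmul, key, key, ← hp n, ← hp (n+1), ih x]
      simp only [← Nat.cast_smul_eq_nsmul (PowerSeries ℂ)]
      push_cast
      generalize ((n : ℕ) : PowerSeries ℂ) = m
      simp only [smul_add, smul_smul]
      rw [show ((m + 1 + 1) * (X * X) : PowerSeries ℂ) = X * X + (m + 1) * (X * X) by ring,
        show ((m + 1 + 1) * (X * ((m + 1) * X)) : PowerSeries ℂ)
          = (m + 1) * (X * ((m + 1) * X)) + (m + 1) * (X * X) by ring, add_smul, add_smul]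
      abel
  have hn : ∀ (n : ℕ) (x : M), (a ^ n) ((X : PowerSeries ℂ) • x)
      = (X : PowerSeries ℂ) • (a ^ n) x
        + n • ((X : PowerSeries ℂ) • (a ^ (n - 1)) ((X : PowerSeries ℂ) • x)) := by
    intro n x
    cases n with
    | zero => simp
    | succ n => simpa using hS n x
  refine ⟨?_, hn⟩
  intro T
  induction T using Polynomial.induction_on' with
  | add p q hp hq =>
    intro x
    simp only [map_add, Polynomial.derivative_add, LinearMap.add_apply,
      hp x, hq x, smul_add]
    abel
  | monomial n c =>
    intro x
    simp only [Polynomial.aeval_monomial, Polynomial.derivative_monomial,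
      Module.End.mul_apply, Module.algebraMap_end_apply]
    rw [hn n x]
    simp only [← algebraMap_smul (PowerSeries ℂ) (c : ℂ),
      ← algebraMap_smul (PowerSeries ℂ) (c * (n:ℂ)),
      ← Nat.cast_smul_eq_nsmul (PowerSeries ℂ), map_mul, map_natCast]
    generalize ((n : ℕ) : PowerSeries ℂ) = m
    simp only [smul_add, smul_smul]
    congr 1 <;> congr 1 <;> ring
end

section
/- Let E be a free ℂ⟦X⟧-module of rank k ≥ 1 equipped with an (a,b)-module structure a, and let e ∈ E be such that (e, a e, a² e, …, a^{k−1} e) is a ℂ⟦X⟧-basis of E and a^k e ∈ X • E. Let θ ∈ ℂ[Y] be a polynomial with θ(0) = 0 and θ′(0) ≠ 0, and set α := θ(a). Then (e, α e, α² e, …, α^{k−1} e) is again a ℂ⟦X⟧-basis of E; equivalently, the images of e, α e, …, α^{k−1} e in E⧸(X • E) form a ℂ-basis of E⧸(X • E). -/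
open PowerSeries

/-- Let `E` be a free `ℂ⟦X⟧`-module of rank `k ≥ 1` with an
(a,b)-module structure `a`, and `e ∈ E` with `(e, a e, …, a^{k-1} e)` a basis
and `a^k e ∈ X • E`.  For any polynomial `θ` with `θ(0) = 0`, `θ′(0) ≠ 0` and
`α := θ(a)`, the family `(e, α e, …, α^{k-1} e)` is again a basis. -/
theorem stmt12 (k : ℕ) (hk : 1 ≤ k)
    (E : Type*) [AddCommGroup E] [Module ℂ E]
    [Module (PowerSeries ℂ) E] [IsScalarTower ℂ (PowerSeries ℂ) E]
    (a : E →ₗ[ℂ] E)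
    (ha : ∀ (S : PowerSeries ℂ) (x : E),
      a (S • x) = S • a x + ((X : PowerSeries ℂ) ^ 2 * derivative ℂ S) • x)
    (e : E) (b : Module.Basis (Fin k) (PowerSeries ℂ) E)
    (hb : ∀ i : Fin k, b i = (a ^ (i : ℕ)) e)
    (hak : ∃ y : E, (a ^ k) e = (X : PowerSeries ℂ) • y)
    (θ : Polynomial ℂ) (hθ0 : θ.coeff 0 = 0) (hθ1 : θ.coeff 1 ≠ 0) :
    ∃ c : Module.Basis (Fin k) (PowerSeries ℂ) E,
      ∀ i : Fin k, c i = ((Polynomial.aeval a θ) ^ (i : ℕ)) e := by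
  classical
  set v : Fin k → E := fun i => ((Polynomial.aeval a θ) ^ (i : ℕ)) e with hv
  -- the "constant coefficient of the i-th coordinate" functional
  set φ : Fin k → E → ℂ := fun i x => PowerSeries.constantCoeff (b.repr x i) with hφ
  have hφ_smul : ∀ (i : Fin k) (c : ℂ) (x : E), φ i (c • x) = c * φ i x := by
    intro i c x
    simp only [hφ]
    rw [show c • x = (algebraMap ℂ (PowerSeries ℂ) c) • x from (algebraMap_smul _ c x).symm]
    rw [map_smul, Finsupp.smul_apply, smul_eq_mul, map_mul]
    congr 1
  have hφ_sum : ∀ (i : Fin k) (s : Finset ℕ) (f : ℕ → E),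
      φ i (∑ m ∈ s, f m) = ∑ m ∈ s, φ i (f m) := by
    intro i s f
    rw [hφ]
    simp only [map_sum, Finsupp.finset_sum_apply]
  -- φ vanishes on X • E
  have hφX : ∀ (i : Fin k) (y : E), φ i ((X : PowerSeries ℂ) • y) = 0 := by
    intro i y
    simp only [hφ]
    rw [map_smul, Finsupp.smul_apply, smul_eq_mul, map_mul]
    simp
  -- a^n e ∈ X • E for n ≥ k
  have hXE : ∀ y : E, ∃ z : E, a ((X : PowerSeries ℂ) • y) = (X : PowerSeries ℂ) • z := by
    intro y
    refine ⟨a y + (X : PowerSeries ℂ) • y, ?_⟩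
    rw [ha]
    rw [smul_add, PowerSeries.derivative_X, mul_one, pow_two, mul_smul]
  have hhigh : ∀ n, k ≤ n → ∃ y : E, (a ^ n) e = (X : PowerSeries ℂ) • y := by
    intro n hn
    induction n with
    | zero => omega
    | succ m ih =>
      rcases Nat.lt_or_ge m k with hm | hm
      · have : m + 1 = k := by omega
        subst this; exact hak
      · obtain ⟨y, hy⟩ := ih hm
        have : (a ^ (m + 1)) e = a ((a ^ m) e) := by
          rw [pow_succ']; rfl
        rw [this, hy]
        exact hXE y
  -- φ i (a^n e) for n < k
  have hlow : ∀ (i : Fin k) (n : ℕ) (hn : n < k),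
      φ i ((a ^ n) e) = if (i : ℕ) = n then 1 else 0 := by
    intro i n hn
    have : (a ^ n) e = b ⟨n, hn⟩ := (hb ⟨n, hn⟩).symm
    rw [this]
    simp only [hφ]
    rw [b.repr_self]
    by_cases h : i = ⟨n, hn⟩
    · subst h; simp
    · rw [Finsupp.single_eq_of_ne h]
      have : (i : ℕ) ≠ n := fun hc => h (Fin.ext hc)
      simp [this]
  have hhigh' : ∀ (i : Fin k) (n : ℕ), k ≤ n → φ i ((a ^ n) e) = 0 := by
    intro i n hn
    obtain ⟨y, hy⟩ := hhigh n hn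
    rw [hy]; exact hφX i y
  -- key computation: φ i (v j) = (θ ^ j).coeff i
  have hkey : ∀ i j : Fin k, φ i (v j) = (θ ^ (j : ℕ)).coeff (i : ℕ) := by
    intro i j
    have hvj : v j = (Polynomial.aeval a (θ ^ (j : ℕ))) e := by
      rw [hv]; simp [map_pow]
    set p : Polynomial ℂ := θ ^ (j : ℕ) with hp
    set n : ℕ := max k (p.natDegree + 1) with hn
    have hdeg : p.natDegree < n := lt_of_lt_of_le (Nat.lt_succ_self _) (le_max_right _ _)
    have hsum : (Polynomial.aeval a p) e
        = ∑ m ∈ Finset.range n, p.coeff m • ((a ^ m) e) := by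
      rw [Polynomial.aeval_eq_sum_range' hdeg]
      rw [LinearMap.coe_sum, Finset.sum_apply]
      simp [LinearMap.smul_apply]
    rw [hvj, hsum, hφ_sum]
    have hterm : ∀ m ∈ Finset.range n,
        φ i (p.coeff m • ((a ^ m) e))
          = if m = (i : ℕ) then p.coeff (i : ℕ) else 0 := by
      intro m _
      rw [hφ_smul]
      rcases Nat.lt_or_ge m k with hm | hm
      · rw [hlow i m hm]
        by_cases h : (i : ℕ) = m
        · subst h; simp
        · simp [h, Ne.symm h]
      · rw [hhigh' i m hm]
        have : m ≠ (i : ℕ) := by omega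
        simp [this]
    rw [Finset.sum_congr rfl hterm]
    rw [Finset.sum_ite_eq' (Finset.range n) ((i : ℕ)) (fun _ => p.coeff (i : ℕ))]
    rw [if_pos (Finset.mem_range.mpr (lt_of_lt_of_le i.isLt (le_max_left _ _)))]
  -- polynomial coefficient facts
  have hθfact : θ = θ.divX * Polynomial.X := by
    conv_lhs => rw [← Polynomial.divX_mul_X_add θ]
    rw [hθ0]; simp
  have hcoeff_lt : ∀ i j : ℕ, i < j → (θ ^ j).coeff i = 0 := by
    intro i j hij
    rw [hθfact, mul_pow, Polynomial.coeff_mul_X_pow', if_neg (by omega)]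
  have hcoeff_diag : ∀ j : ℕ, (θ ^ j).coeff j = (θ.coeff 1) ^ j := by
    intro j
    rw [hθfact, mul_pow, Polynomial.coeff_mul_X_pow', if_pos le_rfl, Nat.sub_self]
    have h1 : (θ.divX * Polynomial.X).coeff 1 = θ.divX.coeff 0 := by
      simp [Polynomial.coeff_mul_X]
    rw [h1, ← Polynomial.constantCoeff_apply, ← Polynomial.constantCoeff_apply, map_pow]
  -- the matrix of v in basis b has unit determinant
  set N : Matrix (Fin k) (Fin k) ℂ :=
    Matrix.of (fun i j : Fin k => (θ ^ (j : ℕ)).coeff (i : ℕ)) with hN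
  have hdet : IsUnit (b.det v) := by
    rw [Module.Basis.det_apply, PowerSeries.isUnit_iff_constantCoeff]
    rw [RingHom.map_det]
    have hmap : (PowerSeries.constantCoeff (R := ℂ)).mapMatrix (b.toMatrix v) = N := by
      ext i j
      simp only [RingHom.mapMatrix_apply, Matrix.map_apply, Module.Basis.toMatrix_apply, hN,
        Matrix.of_apply]
      rw [← hkey i j, hφ]
    rw [hmap]
    have htri : N.BlockTriangular OrderDual.toDual := by
      intro i j hij
      exact hcoeff_lt _ _ (by exact_mod_cast hij)
    rw [Matrix.det_of_lowerTriangular _ htri]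
    refine isUnit_iff_ne_zero.mpr (Finset.prod_ne_zero_iff.mpr fun i _ => ?_)
    simp only [hN, Matrix.of_apply, hcoeff_diag]
    exact pow_ne_zero _ hθ1
  obtain ⟨hli, hspan⟩ := (Module.Basis.is_basis_iff_det b).mpr hdet
  exact ⟨Module.Basis.mk hli hspan.ge, fun i => Module.Basis.mk_apply hli hspan.ge i⟩
end

section
/- Let E be an (a,b)-module (a finite-rank free ℂ⟦X⟧-module with an (a,b)-module structure a), let μ ∈ ℂ, and let x₁, …, x_p ∈ E be ℂ-linearly independent elements satisfying a xⱼ = μ • (X • xⱼ) for every j ∈ {1,…,p}. Then x₁, …, x_p are linearly independent over the ring ℂ⟦X⟧. -/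
open PowerSeries

/-- In an (a,b)-module `E` (finite-rank free `ℂ⟦X⟧`-module
with an (a,b)-structure `a`), elements `x₁, …, x_p` that are `ℂ`-linearly
independent and satisfy `a xⱼ = μ • (X • xⱼ)` are `ℂ⟦X⟧`-linearly
independent. -/
theorem stmt13 (E : Type*) [AddCommGroup E] [Module ℂ E]
    [Module (PowerSeries ℂ) E] [IsScalarTower ℂ (PowerSeries ℂ) E]
    [Module.Free (PowerSeries ℂ) E] [Module.Finite (PowerSeries ℂ) E]
    (a : E →ₗ[ℂ] E)
    (ha : ∀ (S : PowerSeries ℂ) (x : E),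
      a (S • x) = S • a x + ((X : PowerSeries ℂ) ^ 2 * derivative ℂ S) • x)
    (μ : ℂ) (p : ℕ) (x : Fin p → E)
    (hx : ∀ j : Fin p, a (x j) = μ • ((X : PowerSeries ℂ) • x j))
    (hind : LinearIndependent ℂ x) :
    LinearIndependent (PowerSeries ℂ) x := by
  classical
  have hXne : (X : PowerSeries ℂ) ≠ 0 := X_ne_zero
  have hsmulC : ∀ (c : ℂ) (y : E), (C c) • y = c • y := fun c y =>
    algebraMap_smul (PowerSeries ℂ) c y
  have hcomm : ∀ (c : ℂ) (f : PowerSeries ℂ) (y : E), f • (c • y) = c • (f • y) := by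
    intro c f y
    rw [← hsmulC, ← hsmulC, smul_smul, smul_smul, mul_comm]
  have hXcancel : ∀ z : E, (X : PowerSeries ℂ) • z = 0 → z = 0 := by
    intro z hz
    rcases smul_eq_zero.mp hz with h | h
    · exact absurd h hXne
    · exact h
  -- the relation module is closed under derivative
  have hder : ∀ S : Fin p → PowerSeries ℂ, (∑ j, S j • x j = 0) →
      ∑ j, (derivative ℂ (S j)) • x j = 0 := by
    intro S hS
    have h1 : a (∑ j, S j • x j) = 0 := by rw [hS]; exact map_zero a
    rw [map_sum] at h1
    have h2 : ∀ j ∈ Finset.univ, a (S j • x j)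
        = μ • ((X * S j) • x j) + (X : PowerSeries ℂ) ^ 2 • ((derivative ℂ (S j)) • x j) := by
      intro j _
      rw [ha (S j) (x j), hx j, hcomm, smul_smul (S j) X (x j), mul_comm (S j) X,
        mul_smul ((X : PowerSeries ℂ) ^ 2) (derivative ℂ (S j)) (x j)]
    rw [Finset.sum_congr rfl h2, Finset.sum_add_distrib, ← Finset.smul_sum, ← Finset.smul_sum] at h1
    have h3 : ∑ j, (X * S j) • x j = (X : PowerSeries ℂ) • ∑ j, S j • x j := by
      rw [Finset.smul_sum]
      exact Finset.sum_congr rfl fun j _ => mul_smul X (S j) (x j)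
    rw [h3, hS, smul_zero, smul_zero, zero_add, pow_two, mul_smul] at h1
    exact hXcancel _ (hXcancel _ h1)
  -- no element of a free module is divisible by all powers of X
  have hcap : ∀ e : E, (∀ n : ℕ, ∃ u : E, e = (X : PowerSeries ℂ) ^ n • u) → e = 0 := by
    intro e he
    set b := Module.Free.chooseBasis (PowerSeries ℂ) E with hb
    have hco : ∀ i, b.repr e i = 0 := by
      intro i
      apply PowerSeries.ext
      intro m
      rw [map_zero]
      obtain ⟨u, hu⟩ := he (m + 1)
      have h5 : b.repr e i = (X : PowerSeries ℂ) ^ (m + 1) * b.repr u i := by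
        rw [hu, map_smul, Finsupp.smul_apply, smul_eq_mul]
      rw [h5]
      exact X_pow_dvd_iff.mp (Dvd.intro _ rfl) m (Nat.lt_succ_self m)
    have hrepr : b.repr e = 0 := by
      ext i
      simp [hco i]
    have := congrArg b.repr.symm hrepr
    rwa [LinearEquiv.symm_apply_apply, map_zero] at this
  -- key induction: infinite divisibility
  have hK : ∀ n : ℕ, ∀ (k : ℕ) (V : Fin p → PowerSeries ℂ),
      (∑ j, (((k : ℂ) + 1) • V j + X * derivative ℂ (V j)) • x j = 0) →
      ∃ u : E, ∑ j, V j • x j = (X : PowerSeries ℂ) ^ n • u := by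
    intro n
    induction n with
    | zero =>
      intro k V _
      exact ⟨∑ j, V j • x j, by rw [pow_zero, one_smul]⟩
    | succ n ih =>
      intro k V h
      have h2 := hder _ h
      have h2' : ∑ j, (((k : ℂ) + 1 + 1) • derivative ℂ (V j)
          + X * derivative ℂ (derivative ℂ (V j))) • x j = 0 := by
        rw [← h2]
        apply Finset.sum_congr rfl
        intro j _
        congr 1
        rw [map_add, Derivation.map_smul]
        have hl := (derivative ℂ).leibniz (X : PowerSeries ℂ) (derivative ℂ (V j))
        rw [hl, derivative_X, smul_eq_mul, smul_eq_mul, mul_one]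
        module
      obtain ⟨u, hu⟩ := ih (k + 1) (fun j => derivative ℂ (V j)) (by push_cast; exact h2')
      have h4 : ((k : ℂ) + 1) • (∑ j, V j • x j)
          + (X : PowerSeries ℂ) • ∑ j, (derivative ℂ (V j)) • x j = 0 := by
        rw [Finset.smul_sum, Finset.smul_sum, ← Finset.sum_add_distrib, ← h]
        apply Finset.sum_congr rfl
        intro j _
        simp only [smul_eq_C_mul, map_add, map_one, map_natCast]
        rw [add_smul ((k + 1 : PowerSeries ℂ) * V j), mul_smul, mul_smul]
        congr 1
        rw [← Nat.cast_succ, ← Nat.cast_succ, Nat.cast_smul_eq_nsmul, Nat.cast_smul_eq_nsmul]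
      rw [hu] at h4
      have hk1 : ((k : ℂ) + 1) ≠ 0 := Nat.cast_add_one_ne_zero k
      have h6 : ((k : ℂ) + 1) • (∑ j, V j • x j) = (X : PowerSeries ℂ) ^ (n + 1) • (-u) := by
        rw [smul_neg, pow_succ', mul_smul, eq_neg_iff_add_eq_zero]
        exact h4
      refine ⟨((k : ℂ) + 1)⁻¹ • (-u), ?_⟩
      rw [hcomm, ← h6, inv_smul_smul₀ hk1]
  -- constant coefficients of any relation vanish
  have hconst : ∀ S : Fin p → PowerSeries ℂ, (∑ j, S j • x j = 0) →
      ∀ j, constantCoeff (S j) = 0 := by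
    intro S hS
    have hdvd : ∀ j, ∃ V : PowerSeries ℂ,
        S j = C (constantCoeff (S j)) + X * V := by
      intro j
      obtain ⟨V, hV⟩ := X_dvd_iff.mpr
        (show constantCoeff (S j - C (constantCoeff (S j))) = 0 by simp)
      exact ⟨V, by rw [← hV]; ring⟩
    choose V hV using hdvd
    have hd := hder S hS
    have h0 : ∑ j, ((((0 : ℕ) : ℂ) + 1) • V j + X * derivative ℂ (V j)) • x j = 0 := by
      rw [← hd]
      apply Finset.sum_congr rfl
      intro j _
      congr 1
      rw [hV j, map_add, derivative_C, zero_add]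
      have hl := (derivative ℂ).leibniz (X : PowerSeries ℂ) (V j)
      rw [hl, derivative_X, smul_eq_mul, smul_eq_mul, mul_one]
      push_cast
      module
    have hVx : ∑ j, V j • x j = 0 := hcap _ (fun n => hK n 0 V h0)
    have hc : ∑ j, (constantCoeff (S j)) • x j = 0 := by
      have he : ∀ j ∈ Finset.univ, S j • x j
          = (constantCoeff (S j)) • x j + (X : PowerSeries ℂ) • (V j • x j) := by
        intro j _
        conv_lhs => rw [hV j]
        rw [add_smul, hsmulC, mul_smul]
      rw [Finset.sum_congr rfl he, Finset.sum_add_distrib, ← Finset.smul_sum, hVx,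
        smul_zero, add_zero] at hS
      exact hS
    exact fun j => Fintype.linearIndependent_iff.mp hind _ hc j
  -- all coefficients of any relation vanish
  have hzero : ∀ (m : ℕ) (S : Fin p → PowerSeries ℂ), (∑ j, S j • x j = 0) →
      ∀ j, coeff m (S j) = 0 := by
    intro m
    induction m with
    | zero =>
      intro S hS j
      rw [coeff_zero_eq_constantCoeff]
      exact hconst S hS j
    | succ m ih =>
      intro S hS j
      have hdvd : ∀ i, ∃ T : PowerSeries ℂ, S i = X * T := by
        intro i
        obtain ⟨T, hT⟩ := X_dvd_iff.mpr (hconst S hS i)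
        exact ⟨T, hT⟩
      choose T hT using hdvd
      have hTx : ∑ i, T i • x i = 0 := by
        apply hXcancel
        rw [Finset.smul_sum, ← hS]
        apply Finset.sum_congr rfl
        intro i _
        rw [hT i, mul_smul]
      rw [hT j, coeff_succ_X_mul]
      exact ih T hTx j
  refine Fintype.linearIndependent_iff.mpr fun g hg i => ?_
  apply PowerSeries.ext
  intro m
  rw [map_zero]
  exact hzero m g hg i
end

section
/- Let E be an (a,b)-module of rank k ≥ 1 with ℂ⟦X⟧-basis (e₁,…,e_k) such that a eⱼ = λⱼ • (X • eⱼ) + S_{j−1} • e_{j−1} for all j ∈ {1,…,k}, where λ₁,…,λ_k ∈ ℂ, S₀ := 0 and S₁,…,S_{k−1} ∈ ℂ⟦X⟧. For j ∈ {1,…,k} let F_j be the ℂ⟦X⟧-span of e₁,…,e_j (so F_k = E), and for ν ∈ ℕ written as ν = n·k + h with n ∈ ℕ and 0 ≤ h ≤ k−1 define the ℂ-subspace Φ_ν := Xⁿ • F_{k−h} + X^{n+1} • E (the sharp filtration). Then: (i) the filtration is strictly decreasing, Φ₀ = E, and ⋂_{ν ∈ ℕ} Φ_ν = {0}; (ii)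 for each ν, the quotient Φ_ν ⧸ Φ_{ν+1} is a 1-dimensional ℂ-vector space generated by the image of Xⁿ • e_{k−h}; (iii) a(Φ_ν) ⊆ Φ_{ν+1} and X • Φ_ν ⊆ Φ_{ν+k} for all ν. -/
open PowerSeries Pointwise


namespace Stmt16Aux

/-- Natural number exponent pattern for the sharp filtration. -/
def D (k ν i : ℕ) : ℕ := ν / k + if k - ν % k ≤ i then 1 else 0

lemma succ_divmod (k ν : ℕ) (hk : 1 ≤ k) :
    ((ν+1)/k = ν/k ∧ (ν+1)%k = ν%k + 1 ∧ ν%k + 1 < k)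
    ∨ ((ν+1)/k = ν/k + 1 ∧ (ν+1)%k = 0 ∧ ν%k = k - 1) := by
  rcases eq_or_lt_of_le hk with h1 | h2
  · right
    simp [← h1, Nat.mod_one, Nat.div_one]
  · have hm : ν % k < k := Nat.mod_lt _ hk
    have hmod : (ν + 1) % k = (ν % k + 1) % k := by
      conv_lhs => rw [Nat.add_mod, Nat.mod_eq_of_lt h2]
    by_cases hc : ν % k + 1 < k
    · left
      have hmod2 : (ν + 1) % k = ν % k + 1 := by rw [hmod, Nat.mod_eq_of_lt hc]
      refine ⟨?_, hmod2, hc⟩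
      rw [Nat.succ_div, if_neg, add_zero]
      intro hdvd
      have := Nat.dvd_iff_mod_eq_zero.mp hdvd
      omega
    · right
      have hke : ν % k + 1 = k := by omega
      have hmod2 : (ν + 1) % k = 0 := by rw [hmod, hke, Nat.mod_self]
      refine ⟨?_, hmod2, by omega⟩
      rw [Nat.succ_div, if_pos ((Nat.dvd_iff_mod_eq_zero.mpr hmod2))]

variable {k : ℕ}

lemma D_le_succ (hk : 1 ≤ k) (ν i : ℕ) : D k ν i ≤ D k (ν+1) i := by
  have hm : ν % k < k := Nat.mod_lt _ hk
  rcases succ_divmod k ν hk with ⟨h1, h2, h3⟩ | ⟨h1, h2, h3⟩ <;>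
    simp only [D, h1, h2] <;> split_ifs <;> omega

lemma D_succ_le (hk : 1 ≤ k) (ν i : ℕ) : D k (ν+1) i ≤ D k ν i + 1 := by
  have hm : ν % k < k := Nat.mod_lt _ hk
  rcases succ_divmod k ν hk with ⟨h1, h2, h3⟩ | ⟨h1, h2, h3⟩ <;>
    simp only [D, h1, h2] <;> split_ifs <;> omega

lemma D_crit (hk : 1 ≤ k) (ν : ℕ) : D k ν (k - 1 - ν % k) = ν / k := by
  have hm : ν % k < k := Nat.mod_lt _ hk
  simp only [D]
  split_ifs <;> omega

lemma D_succ_crit (hk : 1 ≤ k) (ν : ℕ) : D k (ν+1) (k - 1 - ν % k) = ν / k + 1 := by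
  have hm : ν % k < k := Nat.mod_lt _ hk
  rcases succ_divmod k ν hk with ⟨h1, h2, h3⟩ | ⟨h1, h2, h3⟩ <;>
    simp only [D, h1, h2] <;> split_ifs <;> omega

lemma D_succ_of_ne (hk : 1 ≤ k) (ν : ℕ) {i : ℕ} (hik : i < k)
    (hne : i ≠ k - 1 - ν % k) : D k (ν+1) i = D k ν i := by
  have hm : ν % k < k := Nat.mod_lt _ hk
  rcases succ_divmod k ν hk with ⟨h1, h2, h3⟩ | ⟨h1, h2, h3⟩ <;>
    simp only [D, h1, h2] <;> split_ifs <;> omega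

lemma D_succ_shift (hk : 1 ≤ k) (ν j : ℕ) (hj : j + 1 < k) :
    D k (ν+1) j ≤ D k ν (j+1) := by
  have hm : ν % k < k := Nat.mod_lt _ hk
  rcases succ_divmod k ν hk with ⟨h1, h2, h3⟩ | ⟨h1, h2, h3⟩ <;>
    simp only [D, h1, h2] <;> split_ifs <;> omega

lemma D_zero {i : ℕ} (hik : i < k) : D k 0 i = 0 := by
  simp only [D, Nat.zero_div, Nat.zero_mod, Nat.sub_zero, zero_add]
  exact if_neg (by omega : ¬ k ≤ i)

lemma D_mul (hk : 1 ≤ k) (n : ℕ) {i : ℕ} (hik : i < k) : D k (n * k) i = n := by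
  simp only [D, Nat.mul_div_cancel _ hk, Nat.mul_mod_left, Nat.sub_zero]
  rw [if_neg (by omega), add_zero]

lemma D_addk (hk : 1 ≤ k) (ν i : ℕ) : D k (ν + k) i = D k ν i + 1 := by
  simp only [D, Nat.add_div_right _ hk, Nat.add_mod_right]
  split_ifs <;> omega

lemma dvd_deriv {n : ℕ} {c : PowerSeries ℂ} (h : (X : PowerSeries ℂ)^n ∣ c) :
    (X : PowerSeries ℂ)^(n+1) ∣ (X : PowerSeries ℂ)^2 * derivative ℂ c := by
  cases n with
  | zero =>
    exact dvd_mul_of_dvd_left (by rw [pow_one]; exact dvd_pow_self _ two_ne_zero) _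
  | succ n =>
    have hd : (X : PowerSeries ℂ)^n ∣ derivative ℂ c := by
      rw [X_pow_dvd_iff] at h ⊢
      intro m hm
      rw [coeff_derivative, h (m+1) (by omega), zero_mul]
    have : n + 1 + 1 = 2 + n := by omega
    rw [this, pow_add]
    exact mul_dvd_mul_left _ hd

variable {E : Type*} [AddCommGroup E] [Module ℂ E]
  [Module (PowerSeries ℂ) E] [IsScalarTower ℂ (PowerSeries ℂ) E]

/-- The submodule of elements whose `i`-th coordinate is divisible by `X^(d i)`. -/
def P (e : Module.Basis (Fin k) (PowerSeries ℂ) E) (d : ℕ → ℕ) : Submodule (PowerSeries ℂ) E where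
  carrier := {x | ∀ i : Fin k, (X : PowerSeries ℂ) ^ d (i : ℕ) ∣ e.repr x i}
  add_mem' := fun hx hy i => by
    rw [map_add, Finsupp.add_apply]; exact dvd_add (hx i) (hy i)
  zero_mem' := fun i => by simp
  smul_mem' := fun c x hx i => by
    rw [map_smul, Finsupp.smul_apply, smul_eq_mul]; exact (hx i).mul_left c

lemma mem_P {e : Module.Basis (Fin k) (PowerSeries ℂ) E} {d : ℕ → ℕ} {x : E} :
    x ∈ P e d ↔ ∀ i : Fin k, (X : PowerSeries ℂ) ^ d (i : ℕ) ∣ e.repr x i := Iff.rfl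

lemma P_mono {e : Module.Basis (Fin k) (PowerSeries ℂ) E} {d₁ d₂ : ℕ → ℕ}
    (h : ∀ i : Fin k, d₁ (i : ℕ) ≤ d₂ (i : ℕ)) : P e d₂ ≤ P e d₁ := by
  intro x hx i
  exact dvd_trans (pow_dvd_pow _ (h i)) (hx i)

lemma smul_basis_mem_P {e : Module.Basis (Fin k) (PowerSeries ℂ) E} {d : ℕ → ℕ}
    {g : PowerSeries ℂ} {j : Fin k} (hg : (X : PowerSeries ℂ) ^ d (j : ℕ) ∣ g) :
    g • e j ∈ P e d := by
  intro i
  rw [map_smul, Finsupp.smul_apply, e.repr_self, Finsupp.single_apply, smul_eq_mul]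
  split_ifs with h
  · subst h; simpa using hg
  · simp

lemma repr_smul_basis (e : Module.Basis (Fin k) (PowerSeries ℂ) E) (g : PowerSeries ℂ)
    (j i : Fin k) :
    e.repr (g • e j) i = if j = i then g else 0 := by
  rw [map_smul, Finsupp.smul_apply, e.repr_self, Finsupp.single_apply, smul_eq_mul]
  split_ifs <;> simp

lemma key (hk : 1 ≤ k) (e : Module.Basis (Fin k) (PowerSeries ℂ) E) (ν : ℕ) :
    ((X : PowerSeries ℂ) ^ (ν / k) •
        Submodule.span (PowerSeries ℂ) (e '' {i : Fin k | (i : ℕ) < k - ν % k})) ⊔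
      ((X : PowerSeries ℂ) ^ (ν / k + 1) • (⊤ : Submodule (PowerSeries ℂ) E))
    = P e (D k ν) := by
  apply le_antisymm
  · apply sup_le
    · intro x hx
      rw [← SetLike.mem_coe, Submodule.coe_pointwise_smul] at hx
      obtain ⟨y, hy, rfl⟩ := hx
      intro i
      rw [map_smul, Finsupp.smul_apply, smul_eq_mul]
      by_cases him : k - ν % k ≤ (i : ℕ)
      · have h0 : e.repr y i = 0 := by
          by_contra h0
          have := (Module.Basis.mem_span_image e).mp hy (Finsupp.mem_support_iff.mpr h0)
          simp only [Set.mem_setOf_eq] at this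
          omega
        simp [h0]
      · simp only [D]
        rw [if_neg him, add_zero]
        exact dvd_mul_right _ _
    · intro x hx
      rw [← SetLike.mem_coe, Submodule.coe_pointwise_smul] at hx
      obtain ⟨y, -, rfl⟩ := hx
      intro i
      rw [map_smul, Finsupp.smul_apply, smul_eq_mul]
      refine dvd_trans (pow_dvd_pow _ ?_) (dvd_mul_right _ _)
      simp only [D]; split_ifs <;> omega
  · intro x hx
    have hx' : ∀ i : Fin k, ∃ c, e.repr x i = (X : PowerSeries ℂ) ^ D k ν (i : ℕ) * c := hx
    choose u hu using hx'
    have hx2 : x = (X : PowerSeries ℂ) ^ (ν / k) •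
          (∑ i ∈ Finset.univ.filter (fun i : Fin k => (i : ℕ) < k - ν % k), u i • e i)
        + (X : PowerSeries ℂ) ^ (ν / k + 1) •
          (∑ i ∈ Finset.univ.filter (fun i : Fin k => ¬ (i : ℕ) < k - ν % k), u i • e i) := by
      rw [Finset.smul_sum, Finset.smul_sum]
      conv_lhs => rw [← e.sum_repr x]
      rw [← Finset.sum_filter_add_sum_filter_not Finset.univ
        (fun i : Fin k => (i : ℕ) < k - ν % k)]
      congr 1
      · refine Finset.sum_congr rfl (fun i hi => ?_)
        simp only [Finset.mem_filter] at hi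
        rw [smul_smul, hu i]
        congr 2
        simp only [D]
        rw [if_neg (by omega), add_zero]
      · refine Finset.sum_congr rfl (fun i hi => ?_)
        simp only [Finset.mem_filter] at hi
        rw [smul_smul, hu i]
        congr 2
        simp only [D]
        rw [if_pos (by omega)]
    rw [hx2]
    refine Submodule.add_mem_sup (Submodule.smul_mem_pointwise_smul _ _ _ ?_)
      (Submodule.smul_mem_pointwise_smul _ _ _ Submodule.mem_top)
    refine Submodule.sum_mem _ (fun i hi => ?_)
    simp only [Finset.mem_filter] at hi
    exact Submodule.smul_mem _ _ (Submodule.subset_span ⟨i, hi.2, rfl⟩)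

end Stmt16Aux

/-- Basic properties of the sharp filtration
`Φ_{n·k+h} := Xⁿ • F_{k-h} + X^{n+1} • E` of a rank-`k` fresco with basis
`(e₁,…,e_k)`, `a eⱼ = λⱼ • (X • eⱼ) + S_{j-1} • e_{j-1}`:
it is strictly decreasing with `Φ₀ = E` and trivial intersection, each quotient
`Φ_ν/Φ_{ν+1}` is a 1-dimensional `ℂ`-vector space generated by the image of
`Xⁿ • e_{k-h}`, and `a Φ_ν ⊆ Φ_{ν+1}`, `X • Φ_ν ⊆ Φ_{ν+k}`. -/
theorem stmt16 (k : ℕ) (hk : 1 ≤ k)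
    (E : Type*) [AddCommGroup E] [Module ℂ E]
    [Module (PowerSeries ℂ) E] [IsScalarTower ℂ (PowerSeries ℂ) E]
    (a : E →ₗ[ℂ] E)
    (ha : ∀ (S : PowerSeries ℂ) (x : E),
      a (S • x) = S • a x + ((X : PowerSeries ℂ) ^ 2 * derivative ℂ S) • x)
    (lam : Fin k → ℂ) (S : Fin k → PowerSeries ℂ)
    (e : Module.Basis (Fin k) (PowerSeries ℂ) E)
    (he0 : a (e ⟨0, by omega⟩) =
      lam ⟨0, by omega⟩ • ((X : PowerSeries ℂ) • e ⟨0, by omega⟩))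
    (heS : ∀ (j : ℕ) (h : j + 1 < k),
      a (e ⟨j + 1, h⟩) =
        lam ⟨j + 1, h⟩ • ((X : PowerSeries ℂ) • e ⟨j + 1, h⟩)
          + S ⟨j, by omega⟩ • e ⟨j, by omega⟩)
    (F : ℕ → Submodule (PowerSeries ℂ) E)
    (hF : ∀ m : ℕ, F m =
      Submodule.span (PowerSeries ℂ) (e '' {i : Fin k | (i : ℕ) < m}))
    (Phi : ℕ → Submodule (PowerSeries ℂ) E)
    (hPhi : ∀ ν : ℕ, Phi ν =
      ((X : PowerSeries ℂ) ^ (ν / k) • F (k - ν % k)) ⊔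
        ((X : PowerSeries ℂ) ^ (ν / k + 1) • (⊤ : Submodule (PowerSeries ℂ) E))) :
    -- (i) strictly decreasing, `Φ₀ = E`, trivial intersection
    ((∀ ν : ℕ, Phi (ν + 1) < Phi ν) ∧ Phi 0 = ⊤ ∧ (⨅ ν : ℕ, Phi ν) = ⊥)
    ∧
    -- (ii) `Φ_ν/Φ_{ν+1}` is one-dimensional, generated by the image of
    -- `X^{ν/k} • e_{k - ν % k}`
    (∀ ν : ℕ,
      ((X : PowerSeries ℂ) ^ (ν / k)) • e ⟨k - 1 - ν % k, by omega⟩ ∈ Phi ν ∧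
      ((X : PowerSeries ℂ) ^ (ν / k)) • e ⟨k - 1 - ν % k, by omega⟩ ∉ Phi (ν + 1) ∧
      (∀ x ∈ Phi ν, ∃ c : ℂ,
        x - c • (((X : PowerSeries ℂ) ^ (ν / k)) • e ⟨k - 1 - ν % k, by omega⟩)
          ∈ Phi (ν + 1)))
    ∧
    -- (iii) `a Φ_ν ⊆ Φ_{ν+1}` and `X • Φ_ν ⊆ Φ_{ν+k}`
    (∀ ν : ℕ, (∀ x ∈ Phi ν, a x ∈ Phi (ν + 1)) ∧
      (∀ x ∈ Phi ν, (X : PowerSeries ℂ) • x ∈ Phi (ν + k))) := by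
  have hmk : ∀ ν : ℕ, ν % k < k := fun ν => Nat.mod_lt _ hk
  have key' : ∀ ν : ℕ, Phi ν = Stmt16Aux.P e (Stmt16Aux.D k ν) := by
    intro ν
    rw [hPhi ν, hF]
    exact Stmt16Aux.key hk e ν
  -- generator is in Phi ν
  have hmemgen : ∀ ν : ℕ,
      ((X : PowerSeries ℂ) ^ (ν / k)) • e ⟨k - 1 - ν % k, by omega⟩ ∈ Phi ν := by
    intro ν
    rw [key']
    apply Stmt16Aux.smul_basis_mem_P
    rw [show (((⟨k - 1 - ν % k, by omega⟩ : Fin k)) : ℕ) = k - 1 - ν % k from rfl,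
      Stmt16Aux.D_crit hk ν]
  -- generator is not in Phi (ν+1)
  have hnotmem : ∀ ν : ℕ,
      ((X : PowerSeries ℂ) ^ (ν / k)) • e ⟨k - 1 - ν % k, by omega⟩ ∉ Phi (ν + 1) := by
    intro ν hmem
    rw [key'] at hmem
    have h1 := hmem ⟨k - 1 - ν % k, by omega⟩
    rw [Stmt16Aux.repr_smul_basis, if_pos rfl,
      show (((⟨k - 1 - ν % k, by omega⟩ : Fin k)) : ℕ) = k - 1 - ν % k from rfl,
      Stmt16Aux.D_succ_crit hk ν] at h1
    have h2 := PowerSeries.X_pow_dvd_iff.mp h1 (ν / k) (by omega)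
    rw [PowerSeries.coeff_X_pow, if_pos rfl] at h2
    exact one_ne_zero h2
  -- quotient generation
  have hgen : ∀ ν : ℕ, ∀ x ∈ Phi ν, ∃ c : ℂ,
      x - c • (((X : PowerSeries ℂ) ^ (ν / k)) • e ⟨k - 1 - ν % k, by omega⟩)
        ∈ Phi (ν + 1) := by
    intro ν x hx
    rw [key'] at hx ⊢
    set j : Fin k := ⟨k - 1 - ν % k, by omega⟩ with hj
    set c : ℂ := coeff (ν / k) (e.repr x j) with hc
    refine ⟨c, fun i => ?_⟩
    have hsmul : c • (((X : PowerSeries ℂ) ^ (ν / k)) • e j)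
        = ((PowerSeries.C c) * (X : PowerSeries ℂ) ^ (ν / k)) • e j := by
      rw [← algebraMap_smul (PowerSeries ℂ) c (((X : PowerSeries ℂ) ^ (ν / k)) • e j),
        smul_smul, PowerSeries.C_eq_algebraMap]
    rw [map_sub, Finsupp.sub_apply, hsmul, Stmt16Aux.repr_smul_basis]
    by_cases hij : j = i
    · subst hij
      rw [if_pos rfl,
        show ((j : Fin k) : ℕ) = k - 1 - ν % k from rfl, Stmt16Aux.D_succ_crit hk ν,
        PowerSeries.X_pow_dvd_iff]
      intro m hmlt
      have hxj := hx j
      rw [show ((j : Fin k) : ℕ) = k - 1 - ν % k from rfl, Stmt16Aux.D_crit hk ν] at hxj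
      rw [map_sub]
      rcases Nat.lt_or_ge m (ν / k) with hm2 | hm2
      · rw [PowerSeries.X_pow_dvd_iff.mp hxj m hm2, PowerSeries.coeff_C_mul,
          PowerSeries.coeff_X_pow, if_neg (by omega), mul_zero, sub_zero]
      · have hmeq : m = ν / k := by omega
        subst hmeq
        rw [PowerSeries.coeff_C_mul, PowerSeries.coeff_X_pow, if_pos rfl, mul_one, ← hc,
          sub_self]
    · rw [if_neg hij, sub_zero]
      have hne : (i : ℕ) ≠ k - 1 - ν % k := by
        intro h
        exact hij (by apply Fin.ext; simp [hj, h])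
      rw [Stmt16Aux.D_succ_of_ne hk ν i.isLt hne]
      exact hx i
  -- a maps Phi ν into Phi (ν+1)
  have haPhi : ∀ ν : ℕ, ∀ x ∈ Phi ν, a x ∈ Phi (ν + 1) := by
    intro ν x hx
    rw [key'] at hx ⊢
    have hxe : a x = ∑ i, a (e.repr x i • e i) := by
      conv_lhs => rw [← e.sum_repr x]
      rw [map_sum]
    rw [hxe]
    refine Submodule.sum_mem _ (fun i _ => ?_)
    rw [ha]
    refine Submodule.add_mem _ ?_ (Stmt16Aux.smul_basis_mem_P
      (dvd_trans (pow_dvd_pow _ (Stmt16Aux.D_succ_le hk ν i)) (Stmt16Aux.dvd_deriv (hx i))))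
    obtain ⟨iv, hiv⟩ := i
    cases iv with
    | zero =>
      rw [he0, ← algebraMap_smul (PowerSeries ℂ) (lam ⟨0, by omega⟩), smul_smul, smul_smul]
      apply Stmt16Aux.smul_basis_mem_P
      have h1 : (X : PowerSeries ℂ) ^ (Stmt16Aux.D k ν 0 + 1) ∣
          e.repr x ⟨0, hiv⟩ * algebraMap ℂ (PowerSeries ℂ) (lam ⟨0, by omega⟩)
            * (X : PowerSeries ℂ) := by
        have h2 := mul_dvd_mul (hx ⟨0, hiv⟩) (dvd_refl (X : PowerSeries ℂ))
        rw [← pow_succ] at h2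
        have h3 : e.repr x ⟨0, hiv⟩ * algebraMap ℂ (PowerSeries ℂ) (lam ⟨0, by omega⟩)
              * (X : PowerSeries ℂ)
            = (e.repr x ⟨0, hiv⟩ * (X : PowerSeries ℂ))
              * algebraMap ℂ (PowerSeries ℂ) (lam ⟨0, by omega⟩) := by ring
        rw [h3]
        exact h2.mul_right _
      exact dvd_trans (pow_dvd_pow _ (Stmt16Aux.D_succ_le hk ν 0)) h1
    | succ jv =>
      rw [heS jv hiv, smul_add]
      refine Submodule.add_mem _ ?_ ?_
      · rw [← algebraMap_smul (PowerSeries ℂ) (lam ⟨jv + 1, hiv⟩), smul_smul, smul_smul]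
        apply Stmt16Aux.smul_basis_mem_P
        have h1 : (X : PowerSeries ℂ) ^ (Stmt16Aux.D k ν (jv + 1) + 1) ∣
            e.repr x ⟨jv + 1, hiv⟩ * algebraMap ℂ (PowerSeries ℂ) (lam ⟨jv + 1, hiv⟩)
              * (X : PowerSeries ℂ) := by
          have h2 := mul_dvd_mul (hx ⟨jv + 1, hiv⟩) (dvd_refl (X : PowerSeries ℂ))
          rw [← pow_succ] at h2
          have h3 : e.repr x ⟨jv + 1, hiv⟩ * algebraMap ℂ (PowerSeries ℂ) (lam ⟨jv + 1, hiv⟩)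
                * (X : PowerSeries ℂ)
              = (e.repr x ⟨jv + 1, hiv⟩ * (X : PowerSeries ℂ))
                * algebraMap ℂ (PowerSeries ℂ) (lam ⟨jv + 1, hiv⟩) := by ring
          rw [h3]
          exact h2.mul_right _
        exact dvd_trans (pow_dvd_pow _ (Stmt16Aux.D_succ_le hk ν (jv + 1))) h1
      · rw [smul_smul]
        apply Stmt16Aux.smul_basis_mem_P
        exact Dvd.dvd.mul_right
          (dvd_trans (pow_dvd_pow _ (Stmt16Aux.D_succ_shift hk ν jv hiv))
            (hx ⟨jv + 1, hiv⟩)) _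
  -- X maps Phi ν into Phi (ν+k)
  have hXPhi : ∀ ν : ℕ, ∀ x ∈ Phi ν, (X : PowerSeries ℂ) • x ∈ Phi (ν + k) := by
    intro ν x hx
    rw [key'] at hx ⊢
    intro i
    rw [map_smul, Finsupp.smul_apply, smul_eq_mul, Stmt16Aux.D_addk hk ν, pow_succ,
      mul_comm (X : PowerSeries ℂ) (e.repr x i)]
    exact mul_dvd_mul (hx i) dvd_rfl
  refine ⟨⟨?_, ?_, ?_⟩, fun ν => ⟨hmemgen ν, hnotmem ν, hgen ν⟩,
    fun ν => ⟨haPhi ν, hXPhi ν⟩⟩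
  · intro ν
    refine lt_of_le_of_ne ?_ (fun hEq => hnotmem ν ?_)
    · rw [key' ν, key' (ν + 1)]
      exact Stmt16Aux.P_mono (fun i => Stmt16Aux.D_le_succ hk ν i)
    · rw [hEq]
      exact hmemgen ν
  · rw [key' 0, eq_top_iff]
    intro x _ i
    rw [Stmt16Aux.D_zero i.isLt, pow_zero]
    exact one_dvd _
  · rw [eq_bot_iff]
    intro x hx
    rw [Submodule.mem_bot]
    have hxall : ∀ n : ℕ, x ∈ Stmt16Aux.P e (Stmt16Aux.D k (n * k)) := by
      intro n
      rw [← key' (n * k)]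
      exact Submodule.mem_iInf _ |>.mp hx (n * k)
    have hz : e.repr x = 0 := by
      refine Finsupp.ext (fun i => ?_)
      simp only [Finsupp.coe_zero, Pi.zero_apply]
      refine PowerSeries.ext (fun n => ?_)
      have h1 := hxall (n + 1) i
      rw [Stmt16Aux.D_mul hk (n + 1) i.isLt, PowerSeries.X_pow_dvd_iff] at h1
      rw [map_zero]
      exact h1 n (by omega)
    exact e.repr.map_eq_zero_iff.mp hz
end

section
/- Let k ≥ 1, λ₁ ∈ ℂ, and let S₀, …, S_{k−1} and U₀, …, U_{k−1} be formal power series in ℂ⟦X⟧ such that the order (X-adic valuation) of Sⱼ is at least k − j for every j, and such that for every j ∈ {0,…,k−1} the relation U_{k−1}·Sⱼ + X²·Uⱼ′ − λ₁·X·Uⱼ + U_{j−1} = 0 holds, with the convention U_{−1} := 0. Then for every j ∈ {0,…,k−1} the order of Uⱼ is at least k − j − 1. -/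
open PowerSeries

/-- Let `k ≥ 1`, `λ₁ ∈ ℂ` and `S₀,…,S_{k-1}`,
`U₀,…,U_{k-1} ∈ ℂ⟦X⟧` with `order Sⱼ ≥ k - j` and
`U_{k-1}·Sⱼ + X²·Uⱼ′ - λ₁·X·Uⱼ + U_{j-1} = 0` (convention `U_{-1} = 0`).
Then `order Uⱼ ≥ k - j - 1` for every `j < k`. -/
theorem stmt18 (k : ℕ) (hk : 1 ≤ k) (lam1 : ℂ)
    (S U : ℕ → PowerSeries ℂ)
    (hS : ∀ j < k, ((k - j : ℕ) : ℕ∞) ≤ (S j).order)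
    (hrel : ∀ j < k,
      U (k - 1) * S j + (X : PowerSeries ℂ) ^ 2 * derivative ℂ (U j)
        - lam1 • ((X : PowerSeries ℂ) * U j)
        + (if j = 0 then 0 else U (j - 1)) = 0) :
    ∀ j < k, ((k - j - 1 : ℕ) : ℕ∞) ≤ (U j).order := by
  have key : ∀ i : ℕ, ∀ j, j < k → k - j - 1 = i → ((i : ℕ) : ℕ∞) ≤ (U j).order := by
    intro i
    induction i with
    | zero => intro j _ _; simp
    | succ i ih =>
      intro j hj hji
      have hj1 : j + 1 < k := by omega
      have hprev : ((i : ℕ) : ℕ∞) ≤ (U (j + 1)).order := ih (j + 1) hj1 (by omega)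
      have hrel' := hrel (j + 1) hj1
      rw [if_neg (Nat.succ_ne_zero j)] at hrel'
      simp only [Nat.add_sub_cancel] at hrel'
      have hUj : U j = lam1 • ((X : PowerSeries ℂ) * U (j + 1))
          - U (k - 1) * S (j + 1)
          - (X : PowerSeries ℂ) ^ 2 * derivative ℂ (U (j + 1)) := by
        linear_combination hrel'
      -- order of each summand is at least i+1
      have h1 : ((i + 1 : ℕ) : ℕ∞) ≤ (lam1 • ((X : PowerSeries ℂ) * U (j + 1))).order := by
        rw [PowerSeries.smul_eq_C_mul]
        calc ((i + 1 : ℕ) : ℕ∞) = 1 + (i : ℕ) := by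
              push_cast; ring
          _ ≤ (X : PowerSeries ℂ).order + (U (j + 1)).order := by
              rw [PowerSeries.order_X]; exact add_le_add le_rfl hprev
          _ ≤ ((X : PowerSeries ℂ) * U (j + 1)).order := PowerSeries.le_order_mul _ _
          _ = 0 + ((X : PowerSeries ℂ) * U (j + 1)).order := (zero_add _).symm
          _ ≤ (PowerSeries.C lam1).order + ((X : PowerSeries ℂ) * U (j + 1)).order :=
              add_le_add zero_le le_rfl
          _ ≤ _ := PowerSeries.le_order_mul _ _
      have h2 : ((i + 1 : ℕ) : ℕ∞) ≤ (U (k - 1) * S (j + 1)).order := by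
        have hs := hS (j + 1) hj1
        have hkj : k - (j + 1) = i + 1 := by omega
        rw [hkj] at hs
        calc ((i + 1 : ℕ) : ℕ∞) ≤ (S (j + 1)).order := hs
          _ = 0 + (S (j + 1)).order := (zero_add _).symm
          _ ≤ (U (k - 1)).order + (S (j + 1)).order := add_le_add zero_le le_rfl
          _ ≤ _ := PowerSeries.le_order_mul _ _
      have hd : ((i - 1 : ℕ) : ℕ∞) ≤ (derivative ℂ (U (j + 1))).order := by
        apply PowerSeries.nat_le_order
        intro m hm
        rw [PowerSeries.coeff_derivative]
        have : ((m + 1 : ℕ) : ℕ∞) < (U (j + 1)).order :=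
          lt_of_lt_of_le (by exact_mod_cast (by omega : m + 1 < i)) hprev
        rw [PowerSeries.coeff_of_lt_order _ this, zero_mul]
      have h3 : ((i + 1 : ℕ) : ℕ∞) ≤
          ((X : PowerSeries ℂ) ^ 2 * derivative ℂ (U (j + 1))).order := by
        calc ((i + 1 : ℕ) : ℕ∞) ≤ ((2 : ℕ) : ℕ∞) + ((i - 1 : ℕ) : ℕ∞) := by
              have : (i + 1 : ℕ) ≤ 2 + (i - 1) := by omega
              exact_mod_cast this
          _ ≤ ((X : PowerSeries ℂ) ^ 2).order + (derivative ℂ (U (j + 1))).order := by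
              rw [PowerSeries.order_X_pow]; exact add_le_add le_rfl hd
          _ ≤ _ := PowerSeries.le_order_mul _ _
      rw [hUj]
      apply PowerSeries.nat_le_order
      intro n hn
      have hn' : ((n : ℕ) : ℕ∞) < ((i + 1 : ℕ) : ℕ∞) := by exact_mod_cast hn
      rw [map_sub, map_sub,
        PowerSeries.coeff_of_lt_order _ (lt_of_lt_of_le hn' h1),
        PowerSeries.coeff_of_lt_order _ (lt_of_lt_of_le hn' h2),
        PowerSeries.coeff_of_lt_order _ (lt_of_lt_of_le hn' h3)]
      ring
  intro j hj
  exact key (k - j - 1) j hj rfl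
end
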